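/- arXiv:2201.05874 — 6 statements merged into one kernel-verified Lean document; each statement's English description precedes it below -/
import Mathlib

section
/- Let ‖·‖ be a norm on ℝ^d with unit ball U and let (u^i_1)_{i=1}^m, ..., (u^i_n)_{i=1}^m be n sequences of vectors in U whose union is a zero-sum sequence (i.e., ∑_{i=1}^m ∑_{j=1}^n u^i_j = 0). Then there exist permutations π_1,...,π_n of {1,...,m} such that for every k ∈ {1,...,m}, ‖∑_{i=1}^k ∑_{j=1}^n u^{π_j(i)}_j‖ ≤ n·d. -/
open Finset

section SteinitzAux

variable {d m : ℕ}

/-- Feasibility predicate: `y` is a fractional selection on `A` with coordinate sum `s`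
and zero weighted vector sum. -/
private def Feas (v : Fin m → Fin d → ℝ) (A : Finset (Fin m)) (s : ℝ) (y : Fin m → ℝ) : Prop :=
  (∀ i, 0 ≤ y i) ∧ (∀ i, y i ≤ 1) ∧ (∀ i, i ∉ A → y i = 0) ∧
    (∑ i, y i = s) ∧ (∑ i, y i • v i = 0)

/-- The set of fractional coordinates of `y`. -/
private noncomputable def fset (y : Fin m → ℝ) : Finset (Fin m) :=
  univ.filter (fun i => 0 < y i ∧ y i < 1)

private lemma mem_fset {y : Fin m → ℝ} {i : Fin m} :
    i ∈ fset y ↔ 0 < y i ∧ y i < 1 := by simp [fset]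

/-- A nontrivial linear relation with zero coefficient sum among more than `d+1` vectors. -/
private lemma rel_lemma (v : Fin m → Fin d → ℝ) (F : Finset (Fin m)) (hF : d + 1 < F.card) :
    ∃ w : Fin m → ℝ, (∀ i, i ∉ F → w i = 0) ∧ (∑ i, w i • v i = 0) ∧
      (∑ i, w i = 0) ∧ ∃ i, w i ≠ 0 := by
  classical
  set W : F → ((Fin d → ℝ) × ℝ) := fun i => (v i, 1) with hW
  have hfr : Module.finrank ℝ ((Fin d → ℝ) × ℝ) < Fintype.card F := by
    simp only [Module.finrank_prod, Module.finrank_fintype_fun_eq_card,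
      Module.finrank_self, Fintype.card_coe, Fintype.card_fin]
    omega
  have hnli : ¬ LinearIndependent ℝ W := by
    intro h
    exact absurd h.fintype_card_le_finrank (by omega)
  obtain ⟨g, hg, i0, hi0⟩ := Fintype.not_linearIndependent_iff.mp hnli
  refine ⟨fun i => if h : i ∈ F then g ⟨i, h⟩ else 0, fun i hi => by simp [hi], ?_, ?_, ?_⟩
  · have h1 : ∑ i, (if h : i ∈ F then g ⟨i, h⟩ else 0) • v i
        = ∑ i ∈ F, (if h : i ∈ F then g ⟨i, h⟩ else 0) • v i := by
      refine (Finset.sum_subset F.subset_univ (fun i _ hi => by simp [hi])).symm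
    rw [h1, ← Finset.sum_attach F (fun i => (if h : i ∈ F then g ⟨i, h⟩ else 0) • v i)]
    have h2 : ∑ i ∈ F.attach, (if h : (i : Fin m) ∈ F then g ⟨i, h⟩ else 0) • v i
        = ∑ i ∈ F.attach, g i • v i := by
      refine Finset.sum_congr rfl fun i _ => by simp [i.2]
    rw [h2]
    have h3 : (LinearMap.fst ℝ (Fin d → ℝ) ℝ) (∑ i, g i • W i) = 0 := by rw [hg]; simp
    rw [map_sum] at h3
    simpa [W, Finset.univ_eq_attach] using h3
  · have h1 : ∑ i, (if h : i ∈ F then g ⟨i, h⟩ else 0)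
        = ∑ i ∈ F, (if h : i ∈ F then g ⟨i, h⟩ else 0) := by
      refine (Finset.sum_subset F.subset_univ (fun i _ hi => by simp [hi])).symm
    rw [h1, ← Finset.sum_attach F (fun i => if h : i ∈ F then g ⟨i, h⟩ else 0)]
    have h2 : ∑ i ∈ F.attach, (if h : (i : Fin m) ∈ F then g ⟨i, h⟩ else 0)
        = ∑ i ∈ F.attach, g i := by
      refine Finset.sum_congr rfl fun i _ => by simp [i.2]
    rw [h2]
    have h3 : (LinearMap.snd ℝ (Fin d → ℝ) ℝ) (∑ i, g i • W i) = 0 := by rw [hg]; simp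
    rw [map_sum] at h3
    simpa [W, Finset.univ_eq_attach, smul_eq_mul] using h3
  · exact ⟨i0, by simp [i0.2, hi0]⟩

/-- Purification: any feasible point can be replaced by one with at most `d+1`
fractional coordinates. -/
private lemma purify (v : Fin m → Fin d → ℝ) (A : Finset (Fin m)) (s : ℝ) :
    ∀ c (y : Fin m → ℝ), (fset y).card ≤ c → Feas v A s y →
      ∃ y', Feas v A s y' ∧ (fset y').card ≤ d + 1 := by
  intro c
  induction c with
  | zero => exact fun y hy hf => ⟨y, hf, by omega⟩
  | succ c ih =>
    intro y hy hf
    by_cases hle : (fset y).card ≤ d + 1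
    · exact ⟨y, hf, hle⟩
    push_neg at hle
    obtain ⟨hy0, hy1, hysupp, hysum, hyv⟩ := hf
    obtain ⟨w, hw0, hwv, hws, j0, hj0⟩ := rel_lemma v (fset y) hle
    have hwF : ∀ i, w i ≠ 0 → i ∈ fset y := fun i hi => by
      by_contra h; exact hi (hw0 i h)
    set S : Finset (Fin m) := (fset y).filter (fun i => w i ≠ 0) with hS
    have hSne : S.Nonempty := ⟨j0, Finset.mem_filter.mpr ⟨hwF j0 hj0, hj0⟩⟩
    set g : Fin m → ℝ := fun i => if 0 < w i then (1 - y i) / w i else y i / (-w i) with hg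
    obtain ⟨i0, hi0S, hmin⟩ := S.exists_min_image g hSne
    have hgpos : ∀ j ∈ S, 0 < g j := by
      intro j hj
      rw [hS, Finset.mem_filter] at hj
      obtain ⟨hjF, hjw⟩ := hj
      rw [mem_fset] at hjF
      rw [hg]
      rcases lt_or_gt_of_ne hjw with h | h
      · simp only [if_neg (not_lt.mpr h.le)]
        exact div_pos hjF.1 (by linarith)
      · simp only [if_pos h]
        exact div_pos (by linarith [hjF.2]) h
    set t : ℝ := g i0 with ht
    have htpos : 0 < t := hgpos i0 hi0S
    have hub : ∀ j, 0 < w j → t * w j ≤ 1 - y j := by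
      intro j hjw
      have hjS : j ∈ S := Finset.mem_filter.mpr ⟨hwF j hjw.ne', hjw.ne'⟩
      have := hmin j hjS
      rw [hg] at this; simp only [if_pos hjw] at this
      calc t * w j ≤ ((1 - y j) / w j) * w j := by
            exact mul_le_mul_of_nonneg_right this hjw.le
        _ = 1 - y j := by field_simp
    have hlb : ∀ j, w j < 0 → t * (-w j) ≤ y j := by
      intro j hjw
      have hjS : j ∈ S := Finset.mem_filter.mpr ⟨hwF j hjw.ne, hjw.ne⟩
      have := hmin j hjS
      rw [hg] at this; simp only [if_neg (not_lt.mpr hjw.le)] at this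
      calc t * (-w j) ≤ (y j / (-w j)) * (-w j) := by
            exact mul_le_mul_of_nonneg_right this (by linarith)
        _ = y j := div_mul_cancel₀ _ (by linarith : -w j ≠ 0)
    set y' : Fin m → ℝ := fun j => y j + t * w j with hy'
    have hyF : ∀ j, w j ≠ 0 → (0 < y j ∧ y j < 1) := fun j hj => mem_fset.mp (hwF j hj)
    have hfeas : Feas v A s y' := by
      refine ⟨?_, ?_, ?_, ?_, ?_⟩
      · intro j
        rcases lt_trichotomy (w j) 0 with h | h | h
        · have := hlb j h; rw [hy']; dsimp only; linarith
        · rw [hy']; dsimp only; rw [h]; simpa using hy0 j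
        · have : 0 ≤ t * w j := le_of_lt (mul_pos htpos h)
          rw [hy']; dsimp only; linarith [hy0 j]
      · intro j
        rcases lt_trichotomy (w j) 0 with h | h | h
        · have : t * w j ≤ 0 := le_of_lt (mul_neg_of_pos_of_neg htpos h)
          rw [hy']; dsimp only; linarith [hy1 j]
        · rw [hy']; dsimp only; rw [h]; simpa using hy1 j
        · have := hub j h; rw [hy']; dsimp only; linarith
      · intro j hj
        have h1 : y j = 0 := hysupp j hj
        have h2 : w j = 0 := by
          by_contra h
          exact absurd h1 (by linarith [(hyF j h).1])
        rw [hy']; dsimp only; rw [h1, h2]; ring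
      · rw [hy']; dsimp only
        rw [Finset.sum_add_distrib, hysum, ← Finset.mul_sum, hws]; ring
      · rw [hy']; dsimp only
        have : ∀ j, (y j + t * w j) • v j = y j • v j + t • (w j • v j) := by
          intro j; rw [add_smul, mul_smul]
        simp_rw [this]
        rw [Finset.sum_add_distrib, hyv, ← Finset.smul_sum, hwv, smul_zero, add_zero]
    have hsub : fset y' ⊆ fset y := by
      intro j hj
      rcases eq_or_ne (w j) 0 with h | h
      · rw [mem_fset] at hj ⊢
        rw [hy'] at hj; dsimp only at hj; rw [h] at hj
        simpa using hj
      · exact hwF j h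
    have hi0w : w i0 ≠ 0 := (Finset.mem_filter.mp hi0S).2
    have hi0no : i0 ∉ fset y' := by
      rw [mem_fset]
      rcases lt_or_gt_of_ne hi0w with h | h
      · have : y' i0 = 0 := by
          rw [hy']; dsimp only; rw [ht, hg]
          simp only [if_neg (not_lt.mpr h.le)]
          field_simp
          ring
        rw [this]; simp
      · have : y' i0 = 1 := by
          rw [hy']; dsimp only; rw [ht, hg]
          simp only [if_pos h]
          field_simp
          ring
        rw [this]; simp
    have hcard : (fset y').card < (fset y).card :=
      Finset.card_lt_card ⟨hsub, fun hss => hi0no (hss (Finset.mem_filter.mp hi0S).1)⟩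
    exact ih y' (by omega) hfeas

/-- The downward step: from a feasible point on `A` with `d < |A|`, find an element
that can be removed keeping feasibility. -/
private lemma step (v : Fin m → Fin d → ℝ) (A : Finset (Fin m)) (y : Fin m → ℝ)
    (hd : d < A.card) (hy : Feas v A ((A.card : ℝ) - d) y) :
    ∃ i ∈ A, ∃ y', Feas v (A.erase i) (((A.erase i).card : ℝ) - d) y' := by
  classical
  obtain ⟨hy0, hy1, hysupp, hysum, hyv⟩ := hy
  have hdpos : (0:ℝ) < (A.card : ℝ) - d := by
    have : (d:ℝ) < A.card := by exact_mod_cast hd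
    linarith
  have hnum : (0:ℝ) ≤ (A.card : ℝ) - 1 - d := by
    have : (d:ℝ) + 1 ≤ A.card := by exact_mod_cast hd
    linarith
  set r : ℝ := ((A.card : ℝ) - 1 - d) / ((A.card : ℝ) - d) with hr
  have hr0 : 0 ≤ r := div_nonneg hnum hdpos.le
  have hr1 : r ≤ 1 := by
    rw [hr, div_le_one hdpos]; linarith
  have hfeas1 : Feas v A ((A.card : ℝ) - 1 - d) (fun i => r * y i) := by
    refine ⟨fun i => mul_nonneg hr0 (hy0 i), fun i => ?_, fun i hi => by simp [hysupp i hi],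
      ?_, ?_⟩
    · exact mul_le_one₀ hr1 (hy0 i) (hy1 i)
    · rw [← Finset.mul_sum, hysum, hr]
      field_simp
    · have : ∀ i, (r * y i) • v i = r • (y i • v i) := fun i => by rw [mul_smul]
      simp_rw [this]
      rw [← Finset.smul_sum, hyv, smul_zero]
  obtain ⟨y2, hfeas2, hfc⟩ := purify v A ((A.card : ℝ) - 1 - d) (fset fun i => r * y i).card
    (fun i => r * y i) le_rfl hfeas1
  obtain ⟨h20, h21, h2supp, h2sum, h2v⟩ := hfeas2
  have hzero : ∃ i ∈ A, y2 i = 0 := by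
    by_contra hcon
    push_neg at hcon
    have hpos : ∀ i ∈ A, 0 < y2 i := fun i hi => lt_of_le_of_ne (h20 i) (Ne.symm (hcon i hi))
    set F : Finset (Fin m) := fset y2 with hF
    set O : Finset (Fin m) := A.filter (fun i => y2 i = 1) with hO
    have hFA : F ⊆ A := by
      intro i hi
      rw [hF, mem_fset] at hi
      by_contra h
      have := h2supp i h
      linarith [hi.1]
    have hdisj : Disjoint F O := by
      rw [Finset.disjoint_left]
      intro i hiF hiO
      rw [hF, mem_fset] at hiF
      rw [hO, Finset.mem_filter] at hiO
      linarith [hiF.2, hiO.2]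
    have hunion : F ∪ O = A := by
      apply Finset.Subset.antisymm
      · exact Finset.union_subset hFA (Finset.filter_subset _ _)
      · intro i hi
        rcases eq_or_lt_of_le (h21 i) with h | h
        · exact Finset.mem_union_right _ (by simp [hO, hi, h])
        · exact Finset.mem_union_left _ (by rw [hF, mem_fset]; exact ⟨hpos i hi, h⟩)
    have hcards : F.card + O.card = A.card := by
      rw [← Finset.card_union_of_disjoint hdisj, hunion]
    have hsumA : ∑ i ∈ A, y2 i = (A.card : ℝ) - 1 - d := by
      rw [← h2sum]
      exact (Finset.sum_subset A.subset_univ (fun i _ hi => h2supp i hi))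
    have hOsum : ∑ i ∈ O, y2 i = (O.card : ℝ) := by
      rw [Finset.sum_congr rfl (fun i hi => (Finset.mem_filter.mp hi).2)]
      simp
      rfl
    have hsumsplit : ∑ i ∈ A, y2 i = (∑ i ∈ F, y2 i) + O.card := by
      rw [← hunion, Finset.sum_union hdisj, hOsum]
    have hcast : (F.card : ℝ) + O.card = A.card := by exact_mod_cast hcards
    have hFsum : ∑ i ∈ F, y2 i = (F.card : ℝ) - 1 - d := by
      rw [hsumA] at hsumsplit; linarith
    have hfc' : (F.card : ℝ) ≤ (d : ℝ) + 1 := by exact_mod_cast hfc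
    rcases F.eq_empty_or_nonempty with hFe | hFne
    · rw [hFe] at hFsum
      simp at hFsum
      have : (0:ℝ) ≤ (d:ℝ) := Nat.cast_nonneg d
      linarith
    · have hposF : 0 < ∑ i ∈ F, y2 i :=
        Finset.sum_pos (fun i hi => (mem_fset.mp hi).1) hFne
      linarith
  obtain ⟨i, hiA, hi0⟩ := hzero
  refine ⟨i, hiA, y2, ?_, ?_, ?_, ?_, ?_⟩
  · exact h20
  · exact h21
  · intro j hj
    rcases eq_or_ne j i with rfl | hne
    · exact hi0
    · exact h2supp j (fun hjA => hj (Finset.mem_erase.mpr ⟨hne, hjA⟩))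
  · rw [h2sum, Finset.card_erase_of_mem hiA]
    have h1 : 1 ≤ A.card := Finset.card_pos.mpr ⟨i, hiA⟩
    rw [Nat.cast_sub h1]
    push_cast
    ring
  · exact h2v

end SteinitzAux

section SteinitzCore

variable {d m : ℕ} {N : (Fin d → ℝ) → ℝ} {C : ℝ}

private lemma N_zero (hN_smul : ∀ (c : ℝ) x, N (c • x) = |c| * N x) : N 0 = 0 := by
  have := hN_smul 0 0
  simpa using this

private lemma N_sum_le (hN_add : ∀ x y, N (x + y) ≤ N x + N y)
    (hN_smul : ∀ (c : ℝ) x, N (c • x) = |c| * N x)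
    {ι : Type*} (s : Finset ι) (f : ι → Fin d → ℝ) :
    N (∑ i ∈ s, f i) ≤ ∑ i ∈ s, N (f i) := by
  classical
  induction s using Finset.cons_induction with
  | empty => simp [N_zero hN_smul]
  | cons a s ha ih =>
    rw [Finset.sum_cons, Finset.sum_cons]
    exact le_trans (hN_add _ _) (by linarith)

private lemma sumN (hN_add : ∀ x y, N (x + y) ≤ N x + N y)
    (hN_smul : ∀ (c : ℝ) x, N (c • x) = |c| * N x)
    (v : Fin m → Fin d → ℝ) (hvC : ∀ i, N (v i) ≤ C)
    (s : Finset (Fin m)) : N (∑ i ∈ s, v i) ≤ s.card * C := by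
  calc N (∑ i ∈ s, v i) ≤ ∑ i ∈ s, N (v i) := N_sum_le hN_add hN_smul s v
    _ ≤ ∑ _i ∈ s, C := Finset.sum_le_sum (fun i _ => hvC i)
    _ = s.card * C := by rw [Finset.sum_const, nsmul_eq_mul]

private lemma baseList (hN_add : ∀ x y, N (x + y) ≤ N x + N y)
    (hN_smul : ∀ (c : ℝ) x, N (c • x) = |c| * N x) (hC : 0 ≤ C)
    (v : Fin m → Fin d → ℝ) (hvC : ∀ i, N (v i) ≤ C)
    (A : Finset (Fin m)) (hA : A.card ≤ d) :
    ∃ l : List (Fin m), l.toFinset = A ∧ l.Nodup ∧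
      ∀ k, N (((l.take k).map v).sum) ≤ (d : ℝ) * C := by
  classical
  refine ⟨A.toList, by simp, A.nodup_toList, fun k => ?_⟩
  have hnd : (A.toList.take k).Nodup := (List.take_sublist k A.toList).nodup A.nodup_toList
  rw [← List.sum_toFinset v hnd]
  calc N (∑ i ∈ (A.toList.take k).toFinset, v i)
      ≤ ((A.toList.take k).toFinset.card : ℝ) * C := sumN hN_add hN_smul v hvC _
    _ ≤ (d : ℝ) * C := by
        apply mul_le_mul_of_nonneg_right _ hC
        have h1 : (A.toList.take k).toFinset.card = (A.toList.take k).length :=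
          List.toFinset_card_of_nodup hnd
        have h2 : (A.toList.take k).length ≤ A.toList.length := (List.take_sublist _ _).length_le
        have h3 : A.toList.length = A.card := A.length_toList
        have : (A.toList.take k).toFinset.card ≤ d := by omega
        exact_mod_cast this

private lemma core (hN_add : ∀ x y, N (x + y) ≤ N x + N y)
    (hN_smul : ∀ (c : ℝ) x, N (c • x) = |c| * N x) (hC : 0 ≤ C)
    (v : Fin m → Fin d → ℝ) (hvC : ∀ i, N (v i) ≤ C) :
    ∀ c (A : Finset (Fin m)), A.card = c → d ≤ c →
      (∃ y, Feas v A ((A.card : ℝ) - d) y) →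
      ∃ l : List (Fin m), l.toFinset = A ∧ l.Nodup ∧
        ∀ k, N (((l.take k).map v).sum) ≤ (d : ℝ) * C := by
  intro c
  induction c with
  | zero =>
    intro A hcard hd _
    exact baseList hN_add hN_smul hC v hvC A (by omega)
  | succ c ih =>
    intro A hcard hd hy
    rcases eq_or_lt_of_le hd with hde | hdl
    · exact baseList hN_add hN_smul hC v hvC A (by omega)
    · obtain ⟨y, hyfeas⟩ := hy
      obtain ⟨i, hiA, y', hy'⟩ := step v A y (by omega) hyfeas
      obtain ⟨l', hl'fin, hl'nd, hl'bd⟩ := ih (A.erase i)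
        (by rw [Finset.card_erase_of_mem hiA]; omega) (by omega) ⟨y', hy'⟩
      have hinotl' : i ∉ l' := by
        rw [← List.mem_toFinset, hl'fin]
        exact Finset.notMem_erase i A
      refine ⟨l' ++ [i], ?_, ?_, ?_⟩
      · rw [List.toFinset_append, hl'fin]
        simp only [List.toFinset_cons, List.toFinset_nil, LawfulSingleton.insert_empty_eq]
        rw [Finset.union_comm, ← Finset.insert_eq, Finset.insert_erase hiA]
      · rw [List.nodup_append]
        exact ⟨hl'nd, List.nodup_singleton i, fun a ha b hb h => hinotl' (by simp at hb; subst hb; subst h; exact ha)⟩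
      · intro k
        by_cases hk : k ≤ l'.length
        · rw [List.take_append_of_le_length hk]
          exact hl'bd k
        · push_neg at hk
          have hlen : (l' ++ [i]).length ≤ k := by
            rw [List.length_append, List.length_singleton]; omega
          rw [List.take_of_length_le hlen]
          have hndfull : (l' ++ [i]).Nodup := by
            rw [List.nodup_append]
            exact ⟨hl'nd, List.nodup_singleton i, fun a ha b hb h => hinotl' (by simp at hb; subst hb; subst h; exact ha)⟩
          rw [← List.sum_toFinset v hndfull]
          have hfin : (l' ++ [i]).toFinset = A := by
            rw [List.toFinset_append, hl'fin]
            simp only [List.toFinset_cons, List.toFinset_nil, LawfulSingleton.insert_empty_eq]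
            rw [Finset.union_comm, ← Finset.insert_eq, Finset.insert_erase hiA]
          rw [hfin]
          -- bound N (∑ i ∈ A, v i) ≤ d * C using the feasible point y
          obtain ⟨hy0, hy1, hysupp, hysum, hyv⟩ := hyfeas
          have hsupA : ∑ j ∈ A, y j • v j = 0 := by
            rw [← hyv]
            exact Finset.sum_subset A.subset_univ (fun j _ hj => by rw [hysupp j hj, zero_smul])
          have hsumA : ∑ j ∈ A, y j = (A.card : ℝ) - d := by
            rw [← hysum]
            exact Finset.sum_subset A.subset_univ (fun j _ hj => hysupp j hj)
          have key : ∑ j ∈ A, v j = ∑ j ∈ A, (1 - y j) • v j := by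
            simp_rw [sub_smul, one_smul]
            rw [Finset.sum_sub_distrib, hsupA, sub_zero]
          rw [key]
          calc N (∑ j ∈ A, (1 - y j) • v j)
              ≤ ∑ j ∈ A, N ((1 - y j) • v j) := N_sum_le hN_add hN_smul _ _
            _ = ∑ j ∈ A, (1 - y j) * N (v j) := by
                refine Finset.sum_congr rfl fun j _ => ?_
                rw [hN_smul, abs_of_nonneg (by linarith [hy1 j])]
            _ ≤ ∑ j ∈ A, (1 - y j) * C := by
                refine Finset.sum_le_sum fun j _ => ?_
                exact mul_le_mul_of_nonneg_left (hvC j) (by linarith [hy1 j])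
            _ = ((A.card : ℝ) - ((A.card : ℝ) - d)) * C := by
                rw [← Finset.sum_mul, Finset.sum_sub_distrib, Finset.sum_const, hsumA]
                simp
            _ = (d : ℝ) * C := by ring_nf

end SteinitzCore

private lemma filter_take {m : ℕ} {β : Type*} [AddCommMonoid β]
    (l : List (Fin m)) (hlen : l.length = m) (g : Fin m → β) :
    ∀ k, k ≤ m →
      ∑ i ∈ univ.filter (fun i : Fin m => (i : ℕ) < k), g (l.get (Fin.cast hlen.symm i))
        = ((l.take k).map g).sum := by
  intro k
  induction k with
  | zero => simp
  | succ k ihk =>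
    intro hk
    have hkm : k < m := by omega
    have hf : univ.filter (fun i : Fin m => (i : ℕ) < k + 1)
        = insert (⟨k, hkm⟩ : Fin m) (univ.filter (fun i : Fin m => (i : ℕ) < k)) := by
      ext i
      simp only [Finset.mem_filter, Finset.mem_insert, Finset.mem_univ, true_and, Fin.ext_iff]
      omega
    rw [hf, Finset.sum_insert (by simp)]
    have hkl : k < l.length := by omega
    have htak : l.take (k + 1) = l.take k ++ [l.get ⟨k, hkl⟩] := by
      rw [List.take_succ]
      congr 1
      rw [List.getElem?_eq_getElem hkl]
      rfl
    rw [htak, List.map_append, List.sum_append, ihk (by omega)]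
    simp only [List.map_cons, List.map_nil, List.sum_cons, List.sum_nil, add_zero]
    rw [add_comm]
    rfl

private lemma steinitz {d m : ℕ} {N : (Fin d → ℝ) → ℝ} {C : ℝ}
    (hN_add : ∀ x y, N (x + y) ≤ N x + N y)
    (hN_smul : ∀ (c : ℝ) x, N (c • x) = |c| * N x) (hC : 0 ≤ C)
    (v : Fin m → Fin d → ℝ) (hvC : ∀ i, N (v i) ≤ C)
    (hsum : ∑ i, v i = 0) :
    ∃ π : Equiv.Perm (Fin m), ∀ k, k ≤ m →
      N (∑ i ∈ univ.filter (fun i : Fin m => (i : ℕ) < k), v (π i)) ≤ (d : ℝ) * C := by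
  classical
  have hlist : ∃ l : List (Fin m), l.toFinset = (univ : Finset (Fin m)) ∧ l.Nodup ∧
      ∀ k, N (((l.take k).map v).sum) ≤ (d : ℝ) * C := by
    by_cases hmd : m ≤ d
    · exact baseList hN_add hN_smul hC v hvC univ (by simpa using hmd)
    · push_neg at hmd
      have hm0 : 0 < m := by omega
      refine core hN_add hN_smul hC v hvC m univ (by simp) (by omega) ⟨fun _ => ((m : ℝ) - d) / m, ?_, ?_, ?_, ?_, ?_⟩
      · intro i
        apply div_nonneg _ (Nat.cast_nonneg m)
        have : (d : ℝ) < m := by exact_mod_cast hmd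
        linarith
      · intro i
        rw [div_le_one (by exact_mod_cast hm0)]
        have : (0:ℝ) ≤ d := Nat.cast_nonneg d
        linarith
      · intro i hi
        exact absurd (Finset.mem_univ i) hi
      · rw [Finset.sum_const, nsmul_eq_mul, Finset.card_univ, Fintype.card_fin]
        have hm : (m : ℝ) ≠ 0 := by positivity
        field_simp
      · rw [← Finset.smul_sum, hsum, smul_zero]
  obtain ⟨l, hlfin, hlnd, hlbd⟩ := hlist
  have hlen : l.length = m := by
    have := List.toFinset_card_of_nodup hlnd
    rw [hlfin] at this
    simpa using this.symm
  have hinj : Function.Injective (fun i : Fin m => l.get (Fin.cast hlen.symm i)) := by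
    intro a b hab
    have := (List.nodup_iff_injective_get.mp hlnd) hab
    exact Fin.cast_injective _ this
  let π : Equiv.Perm (Fin m) :=
    Equiv.ofBijective _ (Finite.injective_iff_bijective.mp hinj)
  refine ⟨π, fun k hk => ?_⟩
  have hπ : ∀ i, π i = l.get (Fin.cast hlen.symm i) := fun i => rfl
  simp_rw [hπ]
  rw [filter_take l hlen v k hk]
  exact hlbd k

theorem stmt3 (d m n : ℕ) (N : (Fin d → ℝ) → ℝ)
    (hN_add : ∀ x y, N (x + y) ≤ N x + N y)
    (hN_smul : ∀ (c : ℝ) x, N (c • x) = |c| * N x)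
    (u : Fin m → Fin n → Fin d → ℝ)
    (hu_norm : ∀ i j, N (u i j) ≤ 1)
    (hzero : ∑ i, ∑ j, u i j = 0) :
    ∃ π : Fin n → Equiv.Perm (Fin m), ∀ k : ℕ, 1 ≤ k → k ≤ m →
      N (∑ i ∈ Finset.univ.filter (fun i : Fin m => (i:ℕ) < k),
          ∑ j, u (π j i) j) ≤ (n:ℝ) * d := by
  set v : Fin m → Fin d → ℝ := fun i => ∑ j, u i j with hv
  have hvC : ∀ i, N (v i) ≤ (n : ℝ) := by
    intro i
    calc N (v i) ≤ ∑ j, N (u i j) := N_sum_le hN_add hN_smul univ (u i)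
      _ ≤ ∑ _j : Fin n, (1:ℝ) := Finset.sum_le_sum (fun j _ => hu_norm i j)
      _ = (n : ℝ) := by simp
  obtain ⟨π, hπ⟩ := steinitz hN_add hN_smul (Nat.cast_nonneg n) v hvC hzero
  refine ⟨fun _ => π, fun k _ hk => ?_⟩
  have := hπ k hk
  rw [mul_comm] at this
  exact this
end

section
/- Let P := {(α_1,...,α_n) : each α_j ∈ [0,1]^m with ∑_i α^i_j = k, and ∑_{i,j} α^i_j u^i_j = 0} where u^i_j ∈ ℝ^d. Then any vertex of the polytope P has at most 2d fractional (non-integer) coordinates. -/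
open Finset

lemma rowtwo {m k : ℕ} (a : Fin m → ℝ) (hbox : ∀ i, a i ∈ Set.Icc (0:ℝ) 1)
    (hsum : ∑ i, a i = (k:ℝ)) (i1 : Fin m) (h1 : a i1 ≠ 0 ∧ a i1 ≠ 1) :
    ∃ i2, i2 ≠ i1 ∧ a i2 ≠ 0 ∧ a i2 ≠ 1 := by
  by_contra hc
  push_neg at hc
  -- every i ≠ i1 has a i = 0 or 1
  have hint : ∀ i ∈ univ.erase i1, a i = 0 ∨ a i = 1 := by
    intro i hi
    rcases eq_or_ne (a i) 0 with h | h
    · exact Or.inl h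
    · exact Or.inr (hc i (Finset.mem_erase.mp hi).1 h)
  set s := (univ.erase i1).filter (fun i => a i = 1) with hs
  have hsumrest : ∑ i ∈ univ.erase i1, a i = (s.card : ℝ) := by
    rw [← Finset.sum_filter_add_sum_filter_not (univ.erase i1) (fun i => a i = 1) a]
    have h2 : ∑ i ∈ (univ.erase i1).filter (fun i => ¬ a i = 1), a i = 0 := by
      apply Finset.sum_eq_zero
      intro i hi
      rcases Finset.mem_filter.mp hi with ⟨hi1, hi2⟩
      rcases hint i hi1 with h | h
      · exact h
      · exact absurd h hi2
    have h1' : ∑ i ∈ s, a i = (s.card : ℝ) := by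
      rw [Finset.sum_congr rfl (fun i hi => (Finset.mem_filter.mp hi).2)]
      simp
      rfl
    rw [h2, add_zero, ← hs, h1']
  have hsplit : a i1 + ∑ i ∈ univ.erase i1, a i = (k:ℝ) := by
    rw [Finset.add_sum_erase _ a (Finset.mem_univ i1)]
    exact hsum
  have hai1 : a i1 = (k:ℝ) - s.card := by rw [hsumrest] at hsplit; linarith
  have h0 : 0 < a i1 := lt_of_le_of_ne (hbox i1).1 (Ne.symm h1.1)
  have h1' : a i1 < 1 := lt_of_le_of_ne (hbox i1).2 h1.2
  rw [hai1] at h0 h1'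
  have : (s.card : ℝ) < k := by linarith
  have h2 : (k : ℝ) < s.card + 1 := by linarith
  have := Nat.cast_lt (α := ℝ).mp this
  have h2 := by exact_mod_cast h2
  omega

lemma auxv {d m n : ℕ} (k : ℕ) (u : Fin m → Fin n → Fin d → ℝ) (α : Fin n → Fin m → ℝ)
    (hbox : ∀ j i, α j i ∈ Set.Icc (0:ℝ) 1) (hrow : ∀ j, ∑ i, α j i = (k:ℝ))
    (hF : 2*d < (univ.filter
      (fun p : Fin n × Fin m => α p.1 p.2 ≠ 0 ∧ α p.1 p.2 ≠ 1)).card) :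
    ∃ v : Fin n → Fin m → ℝ, v ≠ 0 ∧ (∀ j i, v j i ≠ 0 → (α j i ≠ 0 ∧ α j i ≠ 1)) ∧
      (∀ j, ∑ i, v j i = 0) ∧ (∑ i, ∑ j, (v j i) • u i j = 0) := by
  classical
  set Frac : Finset (Fin n × Fin m) :=
    univ.filter (fun p : Fin n × Fin m => α p.1 p.2 ≠ 0 ∧ α p.1 p.2 ≠ 1) with hFrac
  set fracRow : Fin n → Finset (Fin m) :=
    fun j => univ.filter (fun i => α j i ≠ 0 ∧ α j i ≠ 1) with hfracRow
  have hFracNe : Frac.Nonempty := Finset.card_pos.mp (by omega)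
  obtain ⟨p0, hp0⟩ := hFracNe
  -- the default index
  have hmem : ∀ p : Fin n × Fin m, p ∈ Frac ↔ p.2 ∈ fracRow p.1 := by
    intro p; simp [hFrac, hfracRow]
  -- choose representative per nonempty row
  set i0 : Fin n → Fin m := fun j =>
    if h : (fracRow j).Nonempty then h.choose else p0.2 with hi0def
  have hi0 : ∀ j, (fracRow j).Nonempty → i0 j ∈ fracRow j := by
    intro j h
    simp only [hi0def, dif_pos h]
    exact h.choose_spec
  -- each nonempty row has at least 2 fractional entries
  have hrow2 : ∀ j, (fracRow j).Nonempty → 2 ≤ (fracRow j).card := by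
    intro j ⟨i1, hi1⟩
    rw [hfracRow] at hi1
    simp only [Finset.mem_filter, Finset.mem_univ, true_and] at hi1
    obtain ⟨i2, hne, h2⟩ := rowtwo (α j) (hbox j) (hrow j) i1 hi1
    exact Finset.one_lt_card.mpr ⟨i2, by simp [hfracRow, h2.1, h2.2], i1, by simp [hfracRow, hi1.1, hi1.2], hne⟩
  -- counting
  set R : Finset (Fin n) := univ.filter (fun j => (fracRow j).Nonempty) with hR
  have hFsum : Frac.card = ∑ j ∈ R, (fracRow j).card := by
    have h1 : Frac.card = ∑ j : Fin n, (fracRow j).card := by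
      rw [hFrac]
      rw [Finset.card_filter]
      rw [Fintype.sum_prod_type]
      congr 1
      ext j
      rw [hfracRow, Finset.card_filter]
    rw [h1]
    symm
    apply Finset.sum_subset (Finset.subset_univ R)
    intro j _ hj
    rw [hR] at hj
    simp only [Finset.mem_filter, Finset.mem_univ, true_and] at hj
    simp [Finset.not_nonempty_iff_eq_empty.mp hj]
  have hRF : 2 * R.card ≤ Frac.card := by
    rw [hFsum, two_mul]
    calc R.card + R.card = ∑ _j ∈ R, 2 := by simp [two_mul, mul_comm]
    _ ≤ ∑ j ∈ R, (fracRow j).card := by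
        apply Finset.sum_le_sum
        intro j hj
        exact hrow2 j (by simpa [hR] using hj)
  set T : Finset (Fin n × Fin m) := Frac.filter (fun p => p.2 ≠ i0 p.1) with hT
  set S : Finset (Fin n × Fin m) := Frac.filter (fun p => p.2 = i0 p.1) with hS
  have hTS : T.card + S.card = Frac.card := by
    rw [hT, hS, add_comm]
    exact Finset.card_filter_add_card_filter_not (s := Frac) (p := fun p : Fin n × Fin m => p.2 = i0 p.1)
  have hScard : S.card ≤ R.card := by
    have : S ⊆ R.image (fun j => (j, i0 j)) := by
      intro p hp
      rw [hS] at hp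
      rcases Finset.mem_filter.mp hp with ⟨hp1, hp2⟩
      apply Finset.mem_image.mpr
      refine ⟨p.1, ?_, ?_⟩
      · rw [hR]
        simp only [Finset.mem_filter, Finset.mem_univ, true_and]
        exact ⟨p.2, (hmem p).mp hp1⟩
      · rw [← hp2]
    calc S.card ≤ (R.image (fun j => (j, i0 j))).card := Finset.card_le_card this
    _ ≤ R.card := Finset.card_image_le
  have hTd : d < T.card := by omega
  -- the perturbation basis vectors
  set w : (Fin n × Fin m) → Fin n → Fin m → ℝ := fun p j i =>
    (if ((j,i) : Fin n × Fin m) = p then (1:ℝ) else 0)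
      - (if ((j,i) : Fin n × Fin m) = (p.1, i0 p.1) then 1 else 0) with hw
  have he1 : ∀ (j : Fin n) (q : Fin n × Fin m),
      ∑ i, (if ((j,i) : Fin n × Fin m) = q then (1:ℝ) else 0) = if j = q.1 then 1 else 0 := by
    intro j q
    rcases eq_or_ne j q.1 with h|h
    · simp [Prod.ext_iff, h]
    · simp [Prod.ext_iff, h]
  have hwrow : ∀ p j, ∑ i, w p j i = 0 := by
    intro p j
    simp only [hw, Finset.sum_sub_distrib]
    rw [he1 j p, he1 j (p.1, i0 p.1)]
    simp
  have hwsupp : ∀ p ∈ T, ∀ j i, w p j i ≠ 0 → ((j,i) : Fin n × Fin m) ∈ Frac := by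
    intro p hp j i hne
    have hpF : p ∈ Frac := Finset.mem_of_mem_filter p hp
    have hcases : ((j,i) : Fin n × Fin m) = p ∨ ((j,i) : Fin n × Fin m) = (p.1, i0 p.1) := by
      by_contra hc
      push_neg at hc
      simp [hw, hc.1, hc.2] at hne
      exact hc.2 (by simp [Prod.ext_iff, hne.1, hne.2])
    rcases hcases with h|h
    · rw [h]; exact hpF
    · rw [h]
      have hne' : (fracRow p.1).Nonempty := ⟨p.2, (hmem p).mp hpF⟩
      exact (hmem (p.1, i0 p.1)).mpr (hi0 p.1 hne')
  have hwcoord : ∀ p ∈ T, ∀ q ∈ T, w p q.1 q.2 = if q = p then 1 else 0 := by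
    intro p hp q hq
    have hq2 : q.2 ≠ i0 q.1 := (Finset.mem_filter.mp hq).2
    have h2 : ((q.1, q.2) : Fin n × Fin m) ≠ (p.1, i0 p.1) := by
      intro h
      rw [Prod.ext_iff] at h
      simp only at h
      exact hq2 (h.1 ▸ h.2)
    simp only [hw, h2, if_false, sub_zero, Prod.mk.eta]
  -- the linear map to the d constraints
  set g : {x // x ∈ T} → (Fin d → ℝ) := fun t => ∑ i, ∑ j, w t.1 j i • u i j with hg
  set Ψ : ({x // x ∈ T} → ℝ) →ₗ[ℝ] (Fin d → ℝ) :=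
    { toFun := fun c => ∑ t : {x // x ∈ T}, c t • g t
      map_add' := by intro a b; simp [add_smul, Finset.sum_add_distrib]
      map_smul' := by intro r a; simp [Finset.smul_sum, mul_smul] } with hΨ
  have hnotinj : ¬ Function.Injective Ψ := by
    intro hinj
    have h1 := LinearMap.finrank_le_finrank_of_injective hinj
    rw [Module.finrank_pi, Module.finrank_pi] at h1
    simp only [Fintype.card_coe, Fintype.card_fin] at h1
    omega
  obtain ⟨c1, c2, heq, hne⟩ := Function.not_injective_iff.mp hnotinj
  set c : {x // x ∈ T} → ℝ := c1 - c2 with hc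
  have hc0 : c ≠ 0 := sub_ne_zero.mpr hne
  have hΨc : Ψ c = 0 := by rw [hc, map_sub, heq, sub_self]
  set v : Fin n → Fin m → ℝ := fun j i => ∑ t : {x // x ∈ T}, c t * w t.1 j i with hv
  refine ⟨v, ?_, ?_, ?_, ?_⟩
  · -- v ≠ 0
    obtain ⟨t0, ht0⟩ : ∃ t0, c t0 ≠ 0 := by
      by_contra h
      push_neg at h
      exact hc0 (funext h)
    intro hv0
    have hcoord : v t0.1.1 t0.1.2 = c t0 := by
      simp only [hv]
      rw [Finset.sum_eq_single t0]
      · rw [hwcoord t0.1 t0.2 t0.1 t0.2, if_pos rfl, mul_one]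
      · intro t _ htne
        rw [hwcoord t.1 t.2 t0.1 t0.2, if_neg (fun h => htne (Subtype.ext h).symm), mul_zero]
      · intro h
        exact absurd (Finset.mem_univ t0) h
    rw [hv0] at hcoord
    simp only [Pi.zero_apply] at hcoord
    exact ht0 hcoord.symm
  · -- support
    intro j i hvji
    by_contra hni
    have hnotF : ((j,i) : Fin n × Fin m) ∉ Frac := by
      rw [hFrac]
      simp only [Finset.mem_filter, Finset.mem_univ, true_and]
      exact hni
    apply hvji
    rw [hv]
    apply Finset.sum_eq_zero
    intro t _
    have : w t.1 j i = 0 := by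
      by_contra hwne
      exact hnotF (hwsupp t.1 t.2 j i hwne)
    rw [this, mul_zero]
  · -- row sums
    intro j
    simp only [hv]
    rw [Finset.sum_comm]
    apply Finset.sum_eq_zero
    intro t _
    rw [← Finset.mul_sum, hwrow, mul_zero]
  · -- constraint
    have hkey : ∑ i, ∑ j, v j i • u i j = Ψ c := by
      calc ∑ i, ∑ j, v j i • u i j
          = ∑ i, ∑ j, ∑ t : {x // x ∈ T}, c t • (w t.1 j i • u i j) := by
            simp only [hv, Finset.sum_smul, mul_smul]
        _ = ∑ i, ∑ t : {x // x ∈ T}, ∑ j, c t • (w t.1 j i • u i j) := by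
            exact Finset.sum_congr rfl (fun i _ => Finset.sum_comm)
        _ = ∑ t : {x // x ∈ T}, ∑ i, ∑ j, c t • (w t.1 j i • u i j) := Finset.sum_comm
        _ = Ψ c := by
            simp only [hΨ, hg, LinearMap.coe_mk, AddHom.coe_mk, Finset.smul_sum]
    rw [hkey, hΨc]

theorem stmt7 (d m n k : ℕ) (hk : k ≤ m)
    (u : Fin m → Fin n → Fin d → ℝ)
    (P : Set (Fin n → Fin m → ℝ))
    (hP : P = {α | (∀ j i, α j i ∈ Set.Icc (0:ℝ) 1) ∧
      (∀ j, ∑ i, α j i = (k:ℝ)) ∧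
      (∑ i, ∑ j, (α j i) • u i j = 0)})
    (α : Fin n → Fin m → ℝ) (hα : α ∈ Set.extremePoints ℝ P) :
    (Finset.univ.filter
      (fun p : Fin n × Fin m => α p.1 p.2 ≠ 0 ∧ α p.1 p.2 ≠ 1)).card ≤ 2 * d := by
  classical
  by_contra hcon
  push_neg at hcon
  obtain ⟨hαP, hext⟩ := mem_extremePoints.mp hα
  rw [hP] at hαP
  obtain ⟨hbox, hrowsum, hconstr⟩ := hαP
  obtain ⟨v, hv0, hvsupp, hvrow, hvconstr⟩ := auxv k u α hbox hrowsum hcon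
  -- Frac nonempty
  set Frac : Finset (Fin n × Fin m) :=
    univ.filter (fun p : Fin n × Fin m => α p.1 p.2 ≠ 0 ∧ α p.1 p.2 ≠ 1) with hFrac
  have hFne : Frac.Nonempty := Finset.card_pos.mp (by omega)
  obtain ⟨p0, hp0⟩ := hFne
  -- δ : the minimal slack
  set δ : ℝ := Frac.inf' ⟨p0, hp0⟩ (fun p => min (α p.1 p.2) (1 - α p.1 p.2)) with hδ
  have hδpos : 0 < δ := by
    rw [hδ]
    refine (Finset.lt_inf'_iff _).mpr ?_
    intro p hp
    rw [hFrac] at hp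
    simp only [Finset.mem_filter, Finset.mem_univ, true_and] at hp
    have h1 := (hbox p.1 p.2).1
    have h2 := (hbox p.1 p.2).2
    have h3 : 0 < α p.1 p.2 := lt_of_le_of_ne h1 (Ne.symm hp.1)
    have h4 : α p.1 p.2 < 1 := lt_of_le_of_ne h2 hp.2
    simp [h3, h4]
  -- M : max of |v|
  set M : ℝ := univ.sup' ⟨p0, Finset.mem_univ p0⟩
      (fun p : Fin n × Fin m => |v p.1 p.2|) with hM
  have hMv : ∀ j i, |v j i| ≤ M := fun j i =>
    Finset.le_sup' (fun p : Fin n × Fin m => |v p.1 p.2|) (Finset.mem_univ (j, i))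
  have hM0 : 0 ≤ M := le_trans (abs_nonneg _) (hMv p0.1 p0.2)
  set ε : ℝ := δ / (M + 1) with hε
  have hεpos : 0 < ε := div_pos hδpos (by linarith)
  have hsmall : ∀ j i, |ε * v j i| < δ := by
    intro j i
    rw [abs_mul, abs_of_pos hεpos]
    calc ε * |v j i| ≤ ε * M := by nlinarith [hMv j i]
      _ < ε * (M + 1) := by nlinarith
      _ = δ := by rw [hε]; field_simp
  -- the two perturbed points
  set x1 : Fin n → Fin m → ℝ := fun j i => α j i + ε * v j i with hx1
  set x2 : Fin n → Fin m → ℝ := fun j i => α j i - ε * v j i with hx2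
  have hslack : ∀ j i, v j i ≠ 0 → δ ≤ min (α j i) (1 - α j i) := by
    intro j i hne
    have hf := hvsupp j i hne
    have hmemF : ((j,i) : Fin n × Fin m) ∈ Frac := by
      rw [hFrac]; simp only [Finset.mem_filter, Finset.mem_univ, true_and]; exact hf
    exact Finset.inf'_le _ hmemF
  have hboxpert : ∀ (s : ℝ), |s| = 1 → ∀ j i, α j i + s * (ε * v j i) ∈ Set.Icc (0:ℝ) 1 := by
    intro s hs j i
    rcases eq_or_ne (v j i) 0 with h | h
    · simp [h]; exact ⟨(hbox j i).1, (hbox j i).2⟩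
    · have h1 := hslack j i h
      have h2 := hsmall j i
      have h3 : |s * (ε * v j i)| < δ := by rw [abs_mul, hs, one_mul]; exact h2
      have h4 := abs_lt.mp h3
      have h5 : δ ≤ α j i := le_trans h1 (min_le_left _ _)
      have h6 : δ ≤ 1 - α j i := le_trans h1 (min_le_right _ _)
      constructor <;> [linarith; linarith]
  have hx1P : x1 ∈ P := by
    rw [hP]
    refine ⟨?_, ?_, ?_⟩
    · intro j i
      have := hboxpert 1 (by norm_num) j i
      simpa [hx1] using this
    · intro j
      simp only [hx1, Finset.sum_add_distrib, ← Finset.mul_sum, hvrow j, mul_zero, add_zero]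
      exact hrowsum j
    · simp only [hx1, add_smul, Finset.sum_add_distrib, mul_smul, ← Finset.smul_sum]
      rw [hconstr, hvconstr, smul_zero, add_zero]
  have hx2P : x2 ∈ P := by
    rw [hP]
    refine ⟨?_, ?_, ?_⟩
    · intro j i
      have := hboxpert (-1) (by norm_num) j i
      simpa [hx2, sub_eq_add_neg] using this
    · intro j
      simp only [hx2, Finset.sum_sub_distrib, ← Finset.mul_sum, hvrow j, mul_zero, sub_zero]
      exact hrowsum j
    · simp only [hx2, sub_smul, Finset.sum_sub_distrib, mul_smul, ← Finset.smul_sum]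
      rw [hconstr, hvconstr, smul_zero, sub_zero]
  have hseg : α ∈ openSegment ℝ x1 x2 := by
    refine ⟨1/2, 1/2, by norm_num, by norm_num, by norm_num, ?_⟩
    funext j
    funext i
    simp only [hx1, hx2, Pi.add_apply, Pi.smul_apply, smul_eq_mul]
    ring
  have hx1eq : x1 = α := (hext x1 hx1P x2 hx2P hseg).1
  apply hv0
  funext j
  funext i
  have := congrFun (congrFun hx1eq j) i
  simp only [hx1] at this
  have hεv : ε * v j i = 0 := by linarith
  have := mul_eq_zero.mp hεv
  rcases this with h | h
  · exact absurd h (ne_of_gt hεpos)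
  · exact h
end

section
/- Suppose v ∈ conv{u^1,...,u^{d+1}} satisfies 0 ∈ conv{u^1,...,u^{d+1}}, i.e., there are λ_1,...,λ_{d+1} ≥ 0 with ∑ λ_i = 1 and ∑ λ_i u^i = 0. Then the centroid c := (1/(d+1))·∑_{i=1}^{d+1} u^i satisfies ‖c‖ ≤ (d/(d+1))·max_i ‖u^i‖ for any norm ‖·‖ on ℝ^d. -/
theorem stmt8 (d : ℕ) (N : (Fin d → ℝ) → ℝ)
    (hN_add : ∀ x y, N (x + y) ≤ N x + N y)
    (hN_smul : ∀ (c : ℝ) x, N (c • x) = |c| * N x)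
    (u : Fin (d+1) → Fin d → ℝ)
    (l : Fin (d+1) → ℝ) (hl_nonneg : ∀ i, 0 ≤ l i)
    (hl_sum : ∑ i, l i = 1) (hl_comb : ∑ i, l i • u i = 0) :
    N (((d:ℝ)+1)⁻¹ • ∑ i, u i)
      ≤ ((d:ℝ) / (d+1)) * Finset.univ.sup' Finset.univ_nonempty (fun i => N (u i)) := by
  have hN0 : N 0 = 0 := by
    have := hN_smul 0 0
    simpa using this
  have hNneg : ∀ x, 0 ≤ N x := by
    intro x
    have h2 : N (-x) = N x := by
      have := hN_smul (-1) x; simpa using this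
    have h1 : N (x + (-x)) ≤ N x + N (-x) := hN_add x (-x)
    simp [hN0, h2] at h1
    linarith
  set M := Finset.univ.sup' Finset.univ_nonempty (fun i => N (u i)) with hM
  have hMle : ∀ i, N (u i) ≤ M := fun i => by rw [hM]; exact Finset.le_sup' (fun i => N (u i)) (Finset.mem_univ i)
  have hMnn : 0 ≤ M := le_trans (hNneg (u 0)) (hMle 0)
  obtain ⟨j, -, hj⟩ := Finset.exists_max_image Finset.univ l Finset.univ_nonempty
  have hj' : ∀ i, l i ≤ l j := fun i => hj i (Finset.mem_univ i)
  set L := l j with hL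
  have hLpos : 0 < L := by
    by_contra h
    push_neg at h
    have hz : ∀ i, l i = 0 := fun i => le_antisymm (le_trans (hj' i) h) (hl_nonneg i)
    simp [hz] at hl_sum
  have hL1 : L ≤ 1 := by
    have := Finset.single_le_sum (f := l) (fun i _ => hl_nonneg i) (Finset.mem_univ j)
    rw [hl_sum] at this; exact this
  have hd1 : (0:ℝ) < (d:ℝ)+1 := by positivity
  have hC : (0:ℝ) < L * ((d:ℝ)+1) := by positivity
  set a : Fin (d+1) → ℝ := fun i => ((d:ℝ)+1)⁻¹ - l i / (L * ((d:ℝ)+1)) with ha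
  have ha_nonneg : ∀ i, 0 ≤ a i := by
    intro i
    have h1 : l i / (L*((d:ℝ)+1)) ≤ ((d:ℝ)+1)⁻¹ := by
      rw [div_le_iff₀ hC]
      have h2 : ((d:ℝ)+1)⁻¹ * (L * ((d:ℝ)+1)) = L := by field_simp
      rw [h2]; exact hj' i
    simp only [ha]
    linarith
  have key : ((d:ℝ)+1)⁻¹ • ∑ i, u i = ∑ i, a i • u i := by
    have h0 : ∑ i, (l i / (L * ((d:ℝ)+1))) • u i = 0 := by
      have heq : ∑ i, (l i / (L * ((d:ℝ)+1))) • u i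
          = (L * ((d:ℝ)+1))⁻¹ • ∑ i, l i • u i := by
        rw [Finset.smul_sum]
        refine Finset.sum_congr rfl (fun i _ => ?_)
        rw [smul_smul]
        congr 1
        field_simp
      rw [heq, hl_comb, smul_zero]
    have hsplit : ∑ i, a i • u i
        = ∑ i, (((d:ℝ)+1)⁻¹ • u i - (l i / (L*((d:ℝ)+1))) • u i) := by
      refine Finset.sum_congr rfl (fun i _ => ?_)
      simp [ha, sub_smul]
    rw [hsplit, Finset.sum_sub_distrib, h0, sub_zero, ← Finset.smul_sum]
  rw [key]
  have hsub : N (∑ i, a i • u i) ≤ ∑ i, N (a i • u i) :=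
    Finset.le_sum_of_subadditive N hN0.le hN_add _ _
  have heq1 : ∀ i, N (a i • u i) = a i * N (u i) := by
    intro i
    rw [hN_smul, abs_of_nonneg (ha_nonneg i)]
  have hstep : ∑ i, N (a i • u i) ≤ (∑ i, a i) * M := by
    rw [Finset.sum_mul]
    refine Finset.sum_le_sum (fun i _ => ?_)
    rw [heq1 i]
    exact mul_le_mul_of_nonneg_left (hMle i) (ha_nonneg i)
  have hsuma : ∑ i, a i = 1 - (L * ((d:ℝ)+1))⁻¹ := by
    simp only [ha]
    rw [Finset.sum_sub_distrib, Finset.sum_const, Finset.card_univ, Fintype.card_fin]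
    rw [← Finset.sum_div, hl_sum]
    rw [nsmul_eq_mul]
    push_cast
    field_simp
  have hbound : (∑ i, a i) * M ≤ ((d:ℝ)/(d+1)) * M := by
    apply mul_le_mul_of_nonneg_right _ hMnn
    rw [hsuma]
    have hinv : ((d:ℝ)+1)⁻¹ ≤ (L * ((d:ℝ)+1))⁻¹ := by
      apply inv_anti₀ hC
      nlinarith
    have hdd : (d:ℝ)/((d:ℝ)+1) = 1 - ((d:ℝ)+1)⁻¹ := by field_simp; ring
    rw [hdd]
    linarith
  linarith
end

section
/- Let A ∈ ℤ^{s×t} with all absolute entries at most Δ, and let w ∈ ℝ^t with w ≥ 0 and A w = 0. If ‖w‖₁ > t·(2sΔ+1)^s, then there exists a nonzero integer vector w̄ ∈ ℤ^t with w̄ ≥ 0, A w̄ = 0, and w̄ ≤ w (componentwise). -/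
open Matrix

lemma detBound {m : ℕ} {d : ℤ} (N : Matrix (Fin m) (Fin m) ℤ)
    (hN : ∀ i j, |N i j| ≤ d) : |N.det| ≤ (m.factorial : ℤ) * d ^ m := by
  rw [Matrix.det_apply]
  calc |∑ σ : Equiv.Perm (Fin m), Equiv.Perm.sign σ • ∏ i, N (σ i) i|
      ≤ ∑ σ : Equiv.Perm (Fin m), |Equiv.Perm.sign σ • ∏ i, N (σ i) i| :=
        Finset.abs_sum_le_sum_abs _ _
    _ ≤ ∑ _σ : Equiv.Perm (Fin m), d ^ m := by
        refine Finset.sum_le_sum fun σ _ => ?_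
        have h1 : |Equiv.Perm.sign σ • ∏ i, N (σ i) i| = |∏ i, N (σ i) i| := by
          rcases Int.units_eq_one_or (Equiv.Perm.sign σ) with h | h <;>
            simp [h, abs_neg]
        rw [h1, Finset.abs_prod]
        calc ∏ i, |N (σ i) i| ≤ ∏ _i : Fin m, d :=
              Finset.prod_le_prod (fun i _ => abs_nonneg _) (fun i _ => hN _ _)
          _ = d ^ m := by simp
    _ = (m.factorial : ℤ) * d ^ m := by
        rw [Finset.sum_const, Finset.card_univ, Fintype.card_perm]
        simp [Fintype.card_fin, nsmul_eq_mul]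

lemma cramerBound {k : ℕ} (hk : 1 ≤ k) {d : ℤ} (hd : 1 ≤ d)
    (N : Matrix (Fin k) (Fin k) ℤ) (hN : ∀ i j, |N i j| ≤ d) (i₀ j₀ : Fin k) :
    |(N.updateCol j₀ (Pi.single i₀ 1)).det| ≤ ((k-1).factorial : ℤ) * d ^ (k-1) := by
  obtain ⟨m, rfl⟩ : ∃ m, k = m + 1 := ⟨k - 1, (Nat.succ_pred_eq_of_pos hk).symm⟩
  simp only [Nat.add_sub_cancel]
  set U := N.updateCol j₀ (Pi.single i₀ 1) with hU
  set e : Equiv.Perm (Fin (m+1)) := Equiv.swap 0 i₀ with he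
  set f : Equiv.Perm (Fin (m+1)) := Equiv.swap 0 j₀ with hf
  set Q := U.submatrix e f with hQ
  have habs : |Q.det| = |U.det| := by
    have h1 : Q = (U.submatrix e e).submatrix id (f.trans e.symm) := by
      ext i j; simp [hQ, Matrix.submatrix_apply]
    rw [h1, Matrix.det_permute' (f.trans e.symm) (U.submatrix e e),
      Matrix.det_submatrix_equiv_self, abs_mul]
    rcases Int.units_eq_one_or (Equiv.Perm.sign (f.trans e.symm)) with h | h <;>
      simp [h]
  have he0 : e 0 = i₀ := Equiv.swap_apply_left 0 i₀
  have hf0 : f 0 = j₀ := Equiv.swap_apply_left 0 j₀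
  have hcol : ∀ i, Q i 0 = if i = 0 then 1 else 0 := by
    intro i
    have h1 : Q i 0 = (Pi.single i₀ (1:ℤ) : Fin (m+1) → ℤ) (e i) := by
      show U (e i) (f 0) = _
      rw [hf0, hU, Matrix.updateCol_self]
    rw [h1]
    rcases eq_or_ne i 0 with rfl | hi
    · rw [he0, if_pos rfl, Pi.single_eq_same]
    · have hne : e i ≠ i₀ := by
        intro h
        exact hi (e.injective (h.trans he0.symm))
      rw [Pi.single_eq_of_ne hne, if_neg hi]
  have hdetQ : Q.det = (Q.submatrix (Fin.succAbove 0) Fin.succ).det := by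
    rw [Matrix.det_succ_column_zero]
    rw [Finset.sum_eq_single 0]
    · simp [hcol]
    · intro i _ hi; simp [hcol, hi]
    · intro h; simp at h
  have hminor : ∀ i j, |(Q.submatrix (Fin.succAbove 0) Fin.succ) i j| ≤ d := by
    intro i j
    have hne : f j.succ ≠ j₀ := by
      intro h
      have : (j.succ : Fin (m+1)) = 0 := by
        have := f.injective (a₁ := j.succ) (a₂ := 0)
        apply this; rw [h, hf]; simp [Equiv.swap_apply_left]
      exact (Fin.succ_ne_zero j) this
    have : (Q.submatrix (Fin.succAbove 0) Fin.succ) i j = N (e ((0:Fin (m+1)).succAbove i)) (f j.succ) := by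
      simp [hQ, Matrix.submatrix_apply, hU, Matrix.updateCol_apply, hne]
    rw [this]; exact hN _ _
  rw [← habs, hdetQ]
  exact detBound _ hminor

open scoped Classical

lemma mySignMulSelf (d : ℤ) : Int.sign d * d = |d| := by
  rcases lt_trichotomy d 0 with h | rfl | h
  · rw [Int.sign_eq_neg_one_of_neg h, abs_of_neg h]; ring
  · simp
  · rw [Int.sign_eq_one_of_pos h, abs_of_pos h]; ring

lemma boundedRay (s t : ℕ) (Δ : ℤ) (hΔ : 1 ≤ Δ) (A : Matrix (Fin s) (Fin t) ℤ)
    (hA : ∀ i j, |A i j| ≤ Δ) (n : ℕ) :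
    ∀ (x : Fin t → ℝ), (Finset.univ.filter fun j => x j ≠ 0).card ≤ n →
    (∀ j, 0 ≤ x j) → x ≠ 0 → (∀ i, ∑ j, (A i j : ℝ) * x j = 0) →
    ∃ r : Fin t → ℤ, r ≠ 0 ∧ (∀ j, 0 ≤ r j) ∧ (∀ i, ∑ j, (A i j) * r j = 0) ∧
      (∀ j, x j = 0 → r j = 0) ∧ (∑ j, r j) ≤ ((s+1).factorial : ℤ) * Δ ^ s := by
  induction n with
  | zero =>
    intro x hcard hx0 hxne _
    exfalso
    apply hxne
    funext j
    show x j = 0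
    by_contra hj
    have : j ∈ Finset.univ.filter fun j => x j ≠ 0 := by simp [hj]
    have := Finset.card_pos.mpr ⟨j, this⟩
    omega
  | succ n ih =>
    intro x hcard hx0 hxne hker
    set T : Finset (Fin t) := Finset.univ.filter fun j => x j ≠ 0 with hT
    have hmemT : ∀ j, j ∈ T ↔ x j ≠ 0 := by intro j; simp [hT]
    have hxposT : ∀ j ∈ T, 0 < x j := fun j hj =>
      lt_of_le_of_ne (hx0 j) (Ne.symm ((hmemT j).mp hj))
    -- the extended matrix M with a row of ones
    set M : Matrix (Fin (s+1)) (Fin t) ℤ :=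
      Matrix.of (fun i j => if h : (i : ℕ) < s then A ⟨i, h⟩ j else 1) with hM
    have hMbound : ∀ i j, |M i j| ≤ Δ := by
      intro i j
      by_cases h : (i : ℕ) < s
      · simp only [hM, Matrix.of_apply, dif_pos h]; exact hA _ _
      · simp only [hM, Matrix.of_apply, dif_neg h]; simpa using hΔ
    set v : T → (Fin (s+1) → ℝ) := fun j i => (M i (j : Fin t) : ℝ) with hv
    by_cases hind : LinearIndependent ℝ v
    · -- independent case : construct the ray via Cramer's rule
      -- x ≠ 0 so T is nonempty
      obtain ⟨j₁, hj₁⟩ : ∃ j, x j ≠ 0 := by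
        by_contra h; push_neg at h; exact hxne (funext h)
      have hj₁T : j₁ ∈ T := (hmemT j₁).mpr hj₁
      have hTne : T.Nonempty := ⟨j₁, hj₁T⟩
      set k : ℕ := T.card with hk
      have hk1 : 1 ≤ k := Finset.card_pos.mpr hTne
      have hcardT : Fintype.card T = k := Fintype.card_coe T
      have hkle : k ≤ s + 1 := by
        have := LinearIndependent.fintype_card_le_finrank hind
        rwa [hcardT, Module.finrank_fin_fun] at this
      -- normalize x
      set c : ℝ := ∑ j, x j with hc
      have hcpos : 0 < c := by
        have hle : x j₁ ≤ c := Finset.single_le_sum (fun j _ => hx0 j) (Finset.mem_univ j₁)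
        have := lt_of_le_of_ne (hx0 j₁) (Ne.symm hj₁)
        linarith
      set y : Fin t → ℝ := fun j => x j / c with hy
      have hy0 : ∀ j, 0 ≤ y j := fun j => div_nonneg (hx0 j) hcpos.le
      have hyT : ∀ j ∈ T, 0 < y j := fun j hj => div_pos (hxposT j hj) hcpos
      have hyoff : ∀ j, j ∉ T → y j = 0 := by
        intro j hj
        have : ¬ x j ≠ 0 := fun h => hj ((hmemT j).mpr h)
        push_neg at this
        simp [hy, this]
      have hysum : ∑ j, y j = 1 := by
        rw [hy, ← Finset.sum_div]
        exact div_self hcpos.ne'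
      have hMy : ∀ i : Fin (s+1), ∑ j, (M i j : ℝ) * y j =
          (if (i : ℕ) < s then 0 else 1) := by
        intro i
        by_cases h : (i : ℕ) < s
        · rw [if_pos h]
          have : ∀ j, (M i j : ℝ) * y j = (A ⟨i, h⟩ j : ℝ) * x j / c := by
            intro j; simp [hM, dif_pos h, hy]; ring
          simp only [this, ← Finset.sum_div, hker ⟨i, h⟩, zero_div]
        · rw [if_neg h]
          have : ∀ j, (M i j : ℝ) * y j = y j := by
            intro j; simp [hM, dif_neg h]
          simp only [this, hysum]
      -- the real matrix M' restricted to columns T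
      set M' : Matrix (Fin (s+1)) T ℝ := Matrix.of (fun i j => (M i (j : Fin t) : ℝ)) with hM'
      have hindrows : LinearIndependent ℝ (fun j : T => M'ᵀ j) := by
        have : (fun j : T => M'ᵀ j) = v := by
          funext j; funext i; simp [hM', hv]
        rw [this]; exact hind
      have hrank : M'.rank = k := by
        have h1 : M'ᵀ.rank = Fintype.card T := hindrows.rank_matrix
        rw [← Matrix.rank_transpose M', h1, hcardT]
      have hfr : Module.finrank ℝ (Submodule.span ℝ (Set.range (fun i => M' i))) = k := by
        have := Matrix.rank_eq_finrank_span_row M'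
        rw [hrank] at this
        exact this.symm
      obtain ⟨b, hbsub, hbspan, hbind⟩ :=
        exists_linearIndependent ℝ (Set.range (fun i => M' i))
      haveI : Fintype b := ((Set.finite_range _).subset hbsub).fintype
      have hcardb : Fintype.card b = k := by
        have h1 := finrank_span_set_eq_card hbind
        rw [hbspan, hfr] at h1
        rw [h1]; exact (Set.toFinset_card b).symm
      set β : Fin k ≃ b := (Fintype.equivFinOfCardEq hcardb).symm with hβ
      have hrowex : ∀ a : Fin k, ∃ i, M' i = (β a : T → ℝ) := by
        intro a; exact hbsub (β a).2
      set row : Fin k → Fin (s+1) := fun a => (hrowex a).choose with hrow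
      have hrowspec : ∀ a, M' (row a) = ((β a : b) : T → ℝ) := fun a => (hrowex a).choose_spec
      have hrowinj : Function.Injective row := by
        intro a a' h
        have : ((β a : b) : T → ℝ) = ((β a' : b) : T → ℝ) := by
          rw [← hrowspec a, ← hrowspec a', h]
        exact β.injective (Subtype.ext this)
      set σ : T ≃ Fin k := T.equivFin with hσ
      set col : Fin k → Fin t := fun a => ((σ.symm a : T) : Fin t) with hcol
      have hcolmem : ∀ a, col a ∈ T := fun a => (σ.symm a).2
      -- reindexing sums over T by Fin k
      have hsumT : ∀ (R : Type) [AddCommMonoid R], ∀ f : Fin t → R,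
          ∑ j ∈ T, f j = ∑ a, f (col a) := by
        intro R _ f
        rw [← Finset.sum_coe_sort T]
        exact (Equiv.sum_comp σ.symm (fun j : T => f (j : Fin t))).symm
      set N : Matrix (Fin k) (Fin k) ℤ := Matrix.of (fun a c => M (row a) (col c)) with hN
      set Nr : Matrix (Fin k) (Fin k) ℝ := N.map (Int.cast : ℤ → ℝ) with hNr
      have hNrrows : LinearIndependent ℝ (fun a => Nr a) := by
        have h1 : LinearIndependent ℝ (fun a : Fin k => ((β a : b) : T → ℝ)) :=
          hbind.comp β β.injective
        have h2 := h1.map' (LinearEquiv.funCongrLeft ℝ ℝ σ.symm).toLinearMap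
          (LinearEquiv.ker _)
        have h3 : ((LinearEquiv.funCongrLeft ℝ ℝ σ.symm).toLinearMap ∘
            fun a : Fin k => ((β a : b) : T → ℝ)) = fun a => Nr a := by
          funext a; funext cidx
          simp only [Function.comp_apply, LinearEquiv.coe_coe,
            LinearEquiv.funCongrLeft_apply, LinearMap.funLeft_apply]
          rw [← hrowspec a]
          simp [hNr, hN, hM', hcol]
        rw [← h3]; exact h2
      have hunit : IsUnit Nr := Matrix.linearIndependent_rows_iff_isUnit.mp hNrrows
      have hdetunit : IsUnit Nr.det := (Matrix.isUnit_iff_isUnit_det Nr).mp hunit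
      have hinj : Function.Injective Nr.mulVec := Matrix.mulVec_injective_iff_isUnit.mpr hunit
      have hdetcast : Nr.det = ((N.det : ℤ) : ℝ) := by
        have h0 : Nr = (Int.castRingHom ℝ).mapMatrix N := rfl
        rw [h0, ← RingHom.map_det]
        rfl
      have hdetZne : N.det ≠ 0 := by
        intro h
        apply hdetunit.ne_zero
        rw [hdetcast, h, Int.cast_zero]
      set y' : Fin k → ℝ := fun a => y (col a) with hy'
      have hNy : Nr.mulVec y' = fun a => (if ((row a : Fin (s+1)) : ℕ) < s then 0 else 1) := by
        funext a
        have hrw : Nr.mulVec y' a = ∑ cidx, (M (row a) (col cidx) : ℝ) * y (col cidx) := by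
          simp only [Matrix.mulVec, dotProduct, hNr, hN, Matrix.map_apply,
            Matrix.of_apply, hy']
        have hvan : ∀ j ∈ Finset.univ, j ∉ T → (M (row a) j : ℝ) * y j = 0 :=
          fun j _ hj => by rw [hyoff j hj, mul_zero]
        rw [hrw, ← hsumT ℝ (fun j => (M (row a) j : ℝ) * y j),
          Finset.sum_subset (Finset.subset_univ T) hvan]
        exact hMy (row a)
      -- there must be a row index hitting the "ones" row
      have hex : ∃ a₀, ¬ ((row a₀ : Fin (s+1)) : ℕ) < s := by
        by_contra hno
        push_neg at hno
        have hzero : Nr.mulVec y' = 0 := by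
          rw [hNy]; funext a; simp [hno a]
        have : y' = 0 := by
          apply hinj
          rw [hzero, Matrix.mulVec_zero]
        have h0 : y (col ⟨0, hk1⟩) = 0 := congrFun this ⟨0, hk1⟩
        exact (hyT _ (hcolmem ⟨0, hk1⟩)).ne' h0
      obtain ⟨a₀, ha₀⟩ := hex
      have hbvec : (fun a => (if ((row a : Fin (s+1)) : ℕ) < s then (0:ℝ) else 1)) =
          fun a => ((Pi.single a₀ (1:ℤ) : Fin k → ℤ) a : ℝ) := by
        funext a
        rcases eq_or_ne a a₀ with rfl | ha
        · simp [ha₀, Pi.single_eq_same]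
        · have : ((row a : Fin (s+1)) : ℕ) < s := by
            by_contra h
            apply ha
            apply hrowinj
            apply Fin.ext
            omega
          simp [this, Pi.single_eq_of_ne ha]
      set crZ : Fin k → ℤ := Matrix.cramer N (Pi.single a₀ 1) with hcrZ
      have hcrcast : ∀ cidx, ((crZ cidx : ℤ) : ℝ) =
          Matrix.cramer Nr (fun a => ((Pi.single a₀ (1:ℤ) : Fin k → ℤ) a : ℝ)) cidx := by
        intro cidx
        rw [hcrZ, Matrix.cramer_apply, Matrix.cramer_apply]
        have : Nr.updateCol cidx (fun a => ((Pi.single a₀ (1:ℤ) : Fin k → ℤ) a : ℝ)) =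
            (N.updateCol cidx (Pi.single a₀ 1)).map (Int.cast : ℤ → ℝ) := by
          rw [Matrix.map_updateCol]
          rfl
        rw [this]
        have h2 : (N.updateCol cidx (Pi.single a₀ 1)).map (Int.cast : ℤ → ℝ)
            = (Int.castRingHom ℝ).mapMatrix (N.updateCol cidx (Pi.single a₀ 1)) := rfl
        rw [h2, ← RingHom.map_det]
        rfl
      have hsolve : Nr.det • y' = Matrix.cramer Nr
          (fun a => ((Pi.single a₀ (1:ℤ) : Fin k → ℤ) a : ℝ)) := by
        apply hinj
        rw [Matrix.mulVec_cramer]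
        rw [Matrix.mulVec_smul, hNy, hbvec]
      have hptwise : ∀ cidx, ((N.det : ℤ) : ℝ) * y (col cidx) = ((crZ cidx : ℤ) : ℝ) := by
        intro cidx
        have := congrFun hsolve cidx
        rw [hcrcast, ← this, hdetcast]
        simp [hy']
      set rT : Fin k → ℤ := fun cidx => Int.sign N.det * crZ cidx with hrT
      have habsdet : (1 : ℤ) ≤ |N.det| := by
        rcases (abs_pos.mpr hdetZne) with h; omega
      have hrTcast : ∀ cidx, ((rT cidx : ℤ) : ℝ) = ((|N.det| : ℤ) : ℝ) * y (col cidx) := by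
        intro cidx
        have h7 : rT cidx = Int.sign N.det * crZ cidx := rfl
        have h8 : ((Int.sign N.det * crZ cidx : ℤ) : ℝ)
            = (Int.sign N.det : ℝ) * ((crZ cidx : ℤ) : ℝ) := by push_cast; ring
        rw [h7, h8, ← hptwise cidx,
          show (Int.sign N.det : ℝ) * (((N.det : ℤ) : ℝ) * y (col cidx))
            = ((Int.sign N.det * N.det : ℤ) : ℝ) * y (col cidx) by push_cast; ring,
          mySignMulSelf]
      have hrTpos : ∀ cidx, 0 < rT cidx := by
        intro cidx
        have h1 : (0:ℝ) < ((|N.det| : ℤ) : ℝ) * y (col cidx) := by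
          apply mul_pos
          · exact_mod_cast lt_of_lt_of_le zero_lt_one habsdet
          · exact hyT _ (hcolmem cidx)
        have := hrTcast cidx
        have h2 : (0:ℝ) < ((rT cidx : ℤ) : ℝ) := by rw [this]; exact h1
        exact_mod_cast h2
      set r : Fin t → ℤ := fun j => if h : j ∈ T then rT (σ ⟨j, h⟩) else 0 with hr
      have hrcast : ∀ j, ((r j : ℤ) : ℝ) = ((|N.det| : ℤ) : ℝ) * y j := by
        intro j
        by_cases h : j ∈ T
        · rw [hr]
          simp only [dif_pos h]
          rw [hrTcast]
          have hcc : col (σ ⟨j, h⟩) = j := by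
            show ((σ.symm (σ ⟨j, h⟩) : {u // u ∈ T}) : Fin t) = j
            rw [Equiv.symm_apply_apply]
          rw [hcc]
        · rw [hr]
          simp only [dif_neg h]
          rw [hyoff j h]
          simp
      refine ⟨r, ?_, ?_, ?_, ?_, ?_⟩
      · intro h
        have : r j₁ = 0 := congrFun h j₁
        rw [hr] at this
        simp only [dif_pos hj₁T] at this
        exact (hrTpos _).ne' this
      · intro j
        rw [hr]
        by_cases h : j ∈ T
        · simp only [dif_pos h]; exact (hrTpos _).le
        · simp [dif_neg h]
      · intro i
        have hreal : ((∑ j, A i j * r j : ℤ) : ℝ) = 0 := by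
          push_cast
          have : ∀ j, ((A i j : ℤ) : ℝ) * ((r j : ℤ) : ℝ) =
              ((|N.det| : ℤ) : ℝ) * ((A i j : ℝ) * y j) := by
            intro j; rw [hrcast j]; ring
          rw [Finset.sum_congr rfl (fun j _ => this j), ← Finset.mul_sum]
          have hAy : ∑ j, (A i j : ℝ) * y j = 0 := by
            have : ∀ j, (A i j : ℝ) * y j = ((A i j : ℝ) * x j) / c := by
              intro j; rw [hy]; ring
            rw [Finset.sum_congr rfl (fun j _ => this j), ← Finset.sum_div, hker i,
              zero_div]
          rw [hAy, mul_zero]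
        exact_mod_cast hreal
      · intro j hj
        rw [hr]
        have : j ∉ T := by rw [hmemT]; push_neg; exact hj
        simp [dif_neg this]
      · -- the norm bound
        have hsum1 : ∑ j, r j = ∑ cidx, rT cidx := by
          calc ∑ j, r j = ∑ j ∈ T, r j :=
                (Finset.sum_subset (Finset.subset_univ T) (fun j _ hj => by
                  rw [hr]; simp [dif_neg hj])).symm
            _ = ∑ cidx, r (col cidx) := hsumT ℤ r
            _ = ∑ cidx, rT cidx := by
                apply Finset.sum_congr rfl
                intro cidx _
                rw [hr]
                simp only [dif_pos (hcolmem cidx)]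
                have h5 : (⟨col cidx, hcolmem cidx⟩ : {u // u ∈ T}) = σ.symm cidx :=
                  Subtype.ext rfl
                rw [h5, Equiv.apply_symm_apply]
        have hbnd : ∀ cidx, rT cidx ≤ (Nat.factorial s : ℤ) * Δ ^ s := by
          intro cidx
          have h1 : rT cidx ≤ |rT cidx| := le_abs_self _
          have h2 : |rT cidx| ≤ |crZ cidx| := by
            rw [hrT, abs_mul]
            have h6 : |Int.sign N.det| = 1 := by
              rcases lt_trichotomy N.det 0 with h | h | h
              · rw [Int.sign_eq_neg_one_of_neg h]; rfl
              · exact absurd h hdetZne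
              · rw [Int.sign_eq_one_of_pos h]; rfl
            rw [h6, one_mul]
          have h3 : |crZ cidx| ≤ ((k-1).factorial : ℤ) * Δ ^ (k-1) := by
            rw [hcrZ, Matrix.cramer_apply]
            exact cramerBound hk1 hΔ N (fun a c => hMbound _ _) a₀ cidx
          have h4 : ((k-1).factorial : ℤ) * Δ ^ (k-1) ≤ (Nat.factorial s : ℤ) * Δ ^ s := by
            have hf : (k-1).factorial ≤ s.factorial := Nat.factorial_le (by omega)
            have hp : Δ ^ (k-1) ≤ Δ ^ s := pow_le_pow_right₀ hΔ (by omega)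
            have h5 : (0:ℤ) ≤ Δ ^ (k-1) := pow_nonneg (by omega) _
            calc ((k-1).factorial : ℤ) * Δ ^ (k-1)
                ≤ (s.factorial : ℤ) * Δ ^ (k-1) := by
                  apply mul_le_mul_of_nonneg_right _ h5
                  exact_mod_cast hf
              _ ≤ (s.factorial : ℤ) * Δ ^ s := by
                  apply mul_le_mul_of_nonneg_left hp
                  positivity
          omega
        calc ∑ j, r j = ∑ cidx, rT cidx := hsum1
          _ ≤ ∑ _cidx : Fin k, (Nat.factorial s : ℤ) * Δ ^ s :=
              Finset.sum_le_sum (fun cidx _ => hbnd cidx)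
          _ = (k : ℤ) * ((Nat.factorial s : ℤ) * Δ ^ s) := by
              rw [Finset.sum_const, Finset.card_univ, Fintype.card_fin, nsmul_eq_mul]
          _ ≤ ((s+1) : ℤ) * ((Nat.factorial s : ℤ) * Δ ^ s) := by
              apply mul_le_mul_of_nonneg_right
              · exact_mod_cast hkle
              · positivity
          _ = ((s+1).factorial : ℤ) * Δ ^ s := by
              rw [Nat.factorial_succ]
              push_cast
              ring
    · -- dependent case : reduce the support
      obtain ⟨g, hgsum, i₁, hgne⟩ := Fintype.not_linearIndependent_iff.mp hind
      set z : Fin t → ℝ := fun j => if h : j ∈ T then g ⟨j, h⟩ else 0 with hz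
      have hzoff : ∀ j, j ∉ T → z j = 0 := by intro j hj; simp [hz, dif_neg hj]
      have hzM : ∀ i : Fin (s+1), ∑ j, z j * (M i j : ℝ) = 0 := by
        intro i
        rw [← Finset.sum_subset (Finset.subset_univ T)
          (fun j _ hj => by rw [hzoff j hj, zero_mul])]
        rw [← Finset.sum_coe_sort T (fun j => z j * (M i j : ℝ))]
        have : ∀ j : T, z j * (M i (j:Fin t) : ℝ) = g j * v j i := by
          intro j
          rw [hz]
          simp only [dif_pos j.2, hv]
        rw [Finset.sum_congr rfl (fun j _ => this j)]
        calc ∑ j : T, g j * v j i = ∑ j : T, (g j • v j) i :=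
              Finset.sum_congr rfl (fun j _ => by simp [Pi.smul_apply])
          _ = (∑ j : T, g j • v j) i := (Finset.sum_apply i Finset.univ _).symm
          _ = 0 := congrFun hgsum i
      have hzsum : ∑ j, z j = 0 := by
        have := hzM ⟨s, lt_add_one s⟩
        have h1 : ∀ j, z j * (M ⟨s, lt_add_one s⟩ j : ℝ) = z j := by
          intro j
          simp [hM, dif_neg (lt_irrefl s)]
        rwa [Finset.sum_congr rfl (fun j _ => h1 j)] at this
      have hzA : ∀ i : Fin s, ∑ j, (A i j : ℝ) * z j = 0 := by
        intro i
        have := hzM ⟨i, Nat.lt_succ_of_lt i.2⟩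
        have h1 : ∀ j, z j * (M ⟨i, Nat.lt_succ_of_lt i.2⟩ j : ℝ) = (A i j : ℝ) * z j := by
          intro j
          simp only [hM, Matrix.of_apply, dif_pos i.2]
          rw [mul_comm]
        rwa [Finset.sum_congr rfl (fun j _ => h1 j)] at this
      have hzne : z ≠ 0 := by
        intro h
        apply hgne
        have : z i₁ = 0 := congrFun h i₁
        rw [hz] at this
        simpa [dif_pos i₁.2] using this
      have hzpos : ∃ j, 0 < z j := by
        by_contra hno
        push_neg at hno
        apply hzne
        funext j
        have h1 : ∀ j' ∈ Finset.univ, z j' ≤ 0 := fun j' _ => hno j'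
        have := (Finset.sum_eq_zero_iff_of_nonneg (fun j' _ => neg_nonneg.mpr (hno j'))).mp
          (by rw [Finset.sum_neg_distrib, hzsum, neg_zero])
        have h2 := this j (Finset.mem_univ j)
        simpa using h2
      set P : Finset (Fin t) := Finset.univ.filter fun j => 0 < z j with hP
      have hPne : P.Nonempty := by
        obtain ⟨j, hj⟩ := hzpos
        exact ⟨j, by simp [hP, hj]⟩
      obtain ⟨j₀, hj₀P, hmin⟩ := P.exists_min_image (fun j => x j / z j) hPne
      have hzj₀ : 0 < z j₀ := by simpa [hP] using hj₀P
      have hj₀T : j₀ ∈ T := by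
        by_contra h
        rw [hzoff j₀ h] at hzj₀
        exact lt_irrefl 0 hzj₀
      set θ : ℝ := x j₀ / z j₀ with hθ
      have hθpos : 0 < θ := div_pos (hxposT j₀ hj₀T) hzj₀
      set x' : Fin t → ℝ := fun j => x j - θ * z j with hx'
      have hx'0 : ∀ j, 0 ≤ x' j := by
        intro j
        show 0 ≤ x j - θ * z j
        by_cases h : 0 < z j
        · have hjP : j ∈ P := by simp [hP, h]
          have hle := hmin j hjP
          have h2 : θ * z j ≤ x j := by
            rw [hθ, div_mul_eq_mul_div, div_le_iff₀ hzj₀]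
            exact (div_le_div_iff₀ hzj₀ h).mp hle
          linarith
        · push_neg at h
          have h2 : θ * z j ≤ 0 := mul_nonpos_of_nonneg_of_nonpos hθpos.le h
          have h3 := hx0 j
          linarith
      have hx'j₀ : x' j₀ = 0 := by
        show x j₀ - θ * z j₀ = 0
        rw [hθ, div_mul_cancel₀ _ hzj₀.ne']
        ring
      have hx'supp : ∀ j, x j = 0 → x' j = 0 := by
        intro j hj
        have hjT : j ∉ T := by rw [hmemT]; push_neg; exact hj
        show x j - θ * z j = 0
        rw [hzoff j hjT, hj]
        ring
      have hcard' : (Finset.univ.filter fun j => x' j ≠ 0).card ≤ n := by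
        have hsub : (Finset.univ.filter fun j => x' j ≠ 0) ⊆ T.erase j₀ := by
          intro j hj
          simp only [Finset.mem_filter, Finset.mem_univ, true_and] at hj
          rw [Finset.mem_erase]
          constructor
          · intro h; rw [h] at hj; exact hj hx'j₀
          · rw [hmemT]
            intro h
            exact hj (hx'supp j h)
        calc (Finset.univ.filter fun j => x' j ≠ 0).card ≤ (T.erase j₀).card :=
              Finset.card_le_card hsub
          _ = T.card - 1 := Finset.card_erase_of_mem hj₀T
          _ ≤ n := by omega
      have hx'sum : ∑ j, x' j = ∑ j, x j := by
        show ∑ j, (x j - θ * z j) = ∑ j, x j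
        rw [Finset.sum_sub_distrib, ← Finset.mul_sum, hzsum, mul_zero, sub_zero]
      have hx'ne : x' ≠ 0 := by
        intro h
        have h0 : ∑ j, x' j = 0 := by rw [h]; simp
        rw [hx'sum] at h0
        have : 0 < ∑ j, x j := by
          have hle : x j₀ ≤ ∑ j, x j := Finset.single_le_sum (fun j _ => hx0 j)
            (Finset.mem_univ j₀)
          have := hxposT j₀ hj₀T
          linarith
        linarith
      have hx'ker : ∀ i, ∑ j, (A i j : ℝ) * x' j = 0 := by
        intro i
        show ∑ j, (A i j : ℝ) * (x j - θ * z j) = 0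
        have : ∀ j, (A i j : ℝ) * (x j - θ * z j) =
            (A i j : ℝ) * x j - θ * ((A i j : ℝ) * z j) := by intro j; ring
        rw [Finset.sum_congr rfl (fun j _ => this j), Finset.sum_sub_distrib,
          ← Finset.mul_sum, hker i, hzA i, mul_zero, sub_zero]
      obtain ⟨r, hr1, hr2, hr3, hr4, hr5⟩ := ih x' hcard' hx'0 hx'ne hx'ker
      exact ⟨r, hr1, hr2, hr3, fun j hj => hr4 j (hx'supp j hj), hr5⟩

lemma mainInduction (s t : ℕ) (Δ : ℤ) (hΔ : 1 ≤ Δ) (A : Matrix (Fin s) (Fin t) ℤ)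
    (hA : ∀ i j, |A i j| ≤ Δ) (n : ℕ) :
    ∀ (x : Fin t → ℝ), (Finset.univ.filter fun j => x j ≠ 0).card ≤ n →
    (∀ j, 0 ≤ x j) → (∀ i, ∑ j, (A i j : ℝ) * x j = 0) →
    (∑ j, x j) ≤ (n : ℝ) * ((((s+1).factorial : ℤ) : ℝ) * (Δ : ℝ) ^ s) ∨
    ∃ r : Fin t → ℤ, r ≠ 0 ∧ (∀ j, 0 ≤ r j) ∧ (∀ i, ∑ j, A i j * r j = 0) ∧
      (∀ j, (r j : ℝ) ≤ x j) := by
  have hEnn : (0:ℝ) ≤ (((s+1).factorial : ℤ) : ℝ) * (Δ : ℝ) ^ s := by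
    apply mul_nonneg
    · exact_mod_cast Nat.zero_le _
    · apply pow_nonneg; exact_mod_cast le_trans zero_le_one hΔ
  induction n with
  | zero =>
    intro x hcard hx0 _
    left
    have hx : ∀ j, x j = 0 := by
      intro j
      by_contra hj
      have : j ∈ Finset.univ.filter fun j => x j ≠ 0 := by simp [hj]
      have := Finset.card_pos.mpr ⟨j, this⟩
      omega
    rw [Finset.sum_congr rfl (fun j _ => hx j)]
    simp
  | succ n ih =>
    intro x hcard hx0 hker
    by_cases hxz : x = 0
    · left
      rw [hxz]
      simp only [Pi.zero_apply, Finset.sum_const_zero]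
      positivity
    obtain ⟨r, hr1, hr2, hr3, hr4, hr5⟩ :=
      boundedRay s t Δ hΔ A hA (n+1) x hcard hx0 hxz hker
    -- the set of positive coordinates of r
    set P : Finset (Fin t) := Finset.univ.filter fun j => 0 < r j with hP
    have hPne : P.Nonempty := by
      obtain ⟨j, hj⟩ : ∃ j, r j ≠ 0 := by
        by_contra h; push_neg at h; exact hr1 (funext h)
      exact ⟨j, by simp [hP, lt_of_le_of_ne (hr2 j) (Ne.symm hj)]⟩
    obtain ⟨j₀, hj₀P, hmin⟩ := P.exists_min_image (fun j => x j / (r j : ℝ)) hPne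
    have hrj₀ : 0 < r j₀ := by simpa [hP] using hj₀P
    have hrj₀R : (0:ℝ) < (r j₀ : ℝ) := by exact_mod_cast hrj₀
    have hxj₀ : 0 < x j₀ := by
      have hne : x j₀ ≠ 0 := fun h => hrj₀.ne' (hr4 j₀ h)
      exact lt_of_le_of_ne (hx0 j₀) (Ne.symm hne)
    set θ : ℝ := x j₀ / (r j₀ : ℝ) with hθ
    have hθpos : 0 < θ := div_pos hxj₀ hrj₀R
    have hkey : ∀ j, 0 < r j → θ * (r j : ℝ) ≤ x j := by
      intro j hj
      have hjP : j ∈ P := by simp [hP, hj]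
      have hle := hmin j hjP
      have hjR : (0:ℝ) < (r j : ℝ) := by exact_mod_cast hj
      rw [hθ, div_mul_eq_mul_div, div_le_iff₀ hrj₀R]
      exact (div_le_div_iff₀ hrj₀R hjR).mp hle
    by_cases hθ1 : 1 ≤ θ
    · right
      refine ⟨r, hr1, hr2, hr3, ?_⟩
      intro j
      by_cases hj : 0 < r j
      · have h1 := hkey j hj
        have hjR : (0:ℝ) < (r j : ℝ) := by exact_mod_cast hj
        nlinarith
      · push_neg at hj
        have : r j = 0 := le_antisymm hj (hr2 j)
        rw [this]
        simpa using hx0 j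
    · push_neg at hθ1
      set x' : Fin t → ℝ := fun j => x j - θ * (r j : ℝ) with hx'
      have hx'0 : ∀ j, 0 ≤ x' j := by
        intro j
        show 0 ≤ x j - θ * (r j : ℝ)
        by_cases hj : 0 < r j
        · have := hkey j hj; linarith
        · push_neg at hj
          have h0 : r j = 0 := le_antisymm hj (hr2 j)
          rw [h0]
          simpa using hx0 j
      have hx'j₀ : x' j₀ = 0 := by
        show x j₀ - θ * (r j₀ : ℝ) = 0
        rw [hθ, div_mul_cancel₀ _ hrj₀R.ne']
        ring
      have hx'supp : ∀ j, x j = 0 → x' j = 0 := by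
        intro j hj
        show x j - θ * (r j : ℝ) = 0
        rw [hj, hr4 j hj]
        ring
      have hj₀mem : j₀ ∈ Finset.univ.filter fun j => x j ≠ 0 := by
        simp [hxj₀.ne']
      have hcard' : (Finset.univ.filter fun j => x' j ≠ 0).card ≤ n := by
        have hsub : (Finset.univ.filter fun j => x' j ≠ 0) ⊆
            (Finset.univ.filter fun j => x j ≠ 0).erase j₀ := by
          intro j hj
          simp only [Finset.mem_filter, Finset.mem_univ, true_and] at hj
          rw [Finset.mem_erase]
          refine ⟨fun h => ?_, ?_⟩
          · rw [h] at hj; exact hj hx'j₀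
          · simp only [Finset.mem_filter, Finset.mem_univ, true_and]
            intro h
            exact hj (hx'supp j h)
        calc (Finset.univ.filter fun j => x' j ≠ 0).card
            ≤ ((Finset.univ.filter fun j => x j ≠ 0).erase j₀).card :=
              Finset.card_le_card hsub
          _ = (Finset.univ.filter fun j => x j ≠ 0).card - 1 :=
              Finset.card_erase_of_mem hj₀mem
          _ ≤ n := by
              have := Finset.card_pos.mpr ⟨j₀, hj₀mem⟩
              omega
      have hx'ker : ∀ i, ∑ j, (A i j : ℝ) * x' j = 0 := by
        intro i
        show ∑ j, (A i j : ℝ) * (x j - θ * (r j : ℝ)) = 0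
        have h1 : ∀ j, (A i j : ℝ) * (x j - θ * (r j : ℝ)) =
            (A i j : ℝ) * x j - θ * ((A i j : ℝ) * (r j : ℝ)) := fun j => by ring
        rw [Finset.sum_congr rfl (fun j _ => h1 j), Finset.sum_sub_distrib, hker i,
          ← Finset.mul_sum]
        have h2 : ∑ j, (A i j : ℝ) * (r j : ℝ) = 0 := by
          have := hr3 i
          have h3 : ((∑ j, A i j * r j : ℤ) : ℝ) = ∑ j, (A i j : ℝ) * (r j : ℝ) := by
            push_cast; rfl
          rw [← h3, this, Int.cast_zero]
        rw [h2, mul_zero, sub_zero]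
      rcases ih x' hcard' hx'0 hx'ker with hL | hR
      · left
        have hsums : ∑ j, x j = (∑ j, x' j) + θ * ((∑ j, r j : ℤ) : ℝ) := by
          have h1 : ∀ j, x j = x' j + θ * (r j : ℝ) := by
            intro j
            show x j = (x j - θ * (r j : ℝ)) + θ * (r j : ℝ)
            ring
          rw [Finset.sum_congr rfl (fun j _ => h1 j), Finset.sum_add_distrib,
            ← Finset.mul_sum]
          congr 1
          push_cast
          rfl
        have hrsum : ((∑ j, r j : ℤ) : ℝ) ≤ (((s+1).factorial : ℤ) : ℝ) * (Δ : ℝ) ^ s := by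
          have : (((s+1).factorial : ℤ) * Δ ^ s : ℤ) = (((s+1).factorial : ℤ) * Δ ^ s) := rfl
          exact_mod_cast hr5
        have hrsumnn : (0:ℝ) ≤ ((∑ j, r j : ℤ) : ℝ) := by
          have : (0:ℤ) ≤ ∑ j, r j := Finset.sum_nonneg (fun j _ => hr2 j)
          exact_mod_cast this
        have hstep : θ * ((∑ j, r j : ℤ) : ℝ) ≤
            (((s+1).factorial : ℤ) : ℝ) * (Δ : ℝ) ^ s := by
          calc θ * ((∑ j, r j : ℤ) : ℝ) ≤ 1 * ((∑ j, r j : ℤ) : ℝ) :=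
                mul_le_mul_of_nonneg_right hθ1.le hrsumnn
            _ = ((∑ j, r j : ℤ) : ℝ) := one_mul _
            _ ≤ _ := hrsum
        rw [hsums]
        calc (∑ j, x' j) + θ * ((∑ j, r j : ℤ) : ℝ)
            ≤ (n : ℝ) * ((((s+1).factorial : ℤ) : ℝ) * (Δ : ℝ) ^ s) +
              (((s+1).factorial : ℤ) : ℝ) * (Δ : ℝ) ^ s := add_le_add hL hstep
          _ = ((n : ℝ) + 1) * ((((s+1).factorial : ℤ) : ℝ) * (Δ : ℝ) ^ s) := by ring
          _ = ((n + 1 : ℕ) : ℝ) * ((((s+1).factorial : ℤ) : ℝ) * (Δ : ℝ) ^ s) := by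
              push_cast; ring
      · right
        obtain ⟨r', h1, h2, h3, h4⟩ := hR
        refine ⟨r', h1, h2, h3, fun j => ?_⟩
        have h5 := h4 j
        have h6 : x' j ≤ x j := by
          show x j - θ * (r j : ℝ) ≤ x j
          have : (0:ℝ) ≤ (r j : ℝ) := by exact_mod_cast hr2 j
          nlinarith
        linarith

lemma factPow : ∀ s : ℕ, (s+1).factorial ≤ (s+1)^s := by
  intro s
  induction s with
  | zero => simp
  | succ n ihn =>
    calc (n+2).factorial = (n+2) * (n+1).factorial := Nat.factorial_succ _
      _ ≤ (n+2) * (n+1)^n := Nat.mul_le_mul_left _ ihn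
      _ ≤ (n+2) * (n+2)^n := by
          apply Nat.mul_le_mul_left
          exact Nat.pow_le_pow_left (by omega) n
      _ = (n+2)^(n+1) := (pow_succ' _ _).symm

lemma factIneq (s : ℕ) (Δ : ℤ) (hΔ : 1 ≤ Δ) :
    ((s+1).factorial : ℤ) * Δ^s ≤ (2*(s:ℤ)*Δ+1)^s := by
  rcases Nat.eq_zero_or_pos s with rfl | hs
  · simp
  have h1 : ((s+1).factorial : ℤ) ≤ ((2*s)^s : ℕ) := by
    exact_mod_cast le_trans (factPow s) (Nat.pow_le_pow_left (by omega) s)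
  have h2 : ((s+1).factorial : ℤ) * Δ^s ≤ ((2*s : ℕ) : ℤ)^s * Δ^s := by
    apply mul_le_mul_of_nonneg_right
    · push_cast at h1 ⊢; exact h1
    · positivity
  have h3 : ((2*s : ℕ) : ℤ)^s * Δ^s = (2*(s:ℤ)*Δ)^s := by
    rw [← mul_pow]; push_cast; ring
  have h4 : (2*(s:ℤ)*Δ)^s ≤ (2*(s:ℤ)*Δ+1)^s := by
    apply pow_le_pow_left₀
    · positivity
    · omega
  omega

theorem stmt10 (s t : ℕ) (Δ : ℤ) (A : Matrix (Fin s) (Fin t) ℤ)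
    (hA : ∀ i j, |A i j| ≤ Δ)
    (w : Fin t → ℝ) (hw_nonneg : ∀ j, 0 ≤ w j)
    (hw_ker : (A.map (Int.cast : ℤ → ℝ)).mulVec w = 0)
    (hw_big : (t : ℝ) * (2 * s * Δ + 1)^s < ∑ j, |w j|) :
    ∃ wbar : Fin t → ℤ, wbar ≠ 0 ∧ (∀ j, 0 ≤ wbar j) ∧
      A.mulVec wbar = 0 ∧ (∀ j, (wbar j : ℝ) ≤ w j) := by
  rcases Nat.eq_zero_or_pos t with rfl | ht
  · exfalso
    simp only [Finset.univ_eq_empty, Finset.sum_empty, Nat.cast_zero, zero_mul] at hw_big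
    exact lt_irrefl 0 hw_big
  have habs : ∑ j, |w j| = ∑ j, w j :=
    Finset.sum_congr rfl (fun j _ => abs_of_nonneg (hw_nonneg j))
  rw [habs] at hw_big
  have hker : ∀ i, ∑ j, (A i j : ℝ) * w j = 0 := by
    intro i
    have := congrFun hw_ker i
    simpa [Matrix.mulVec, dotProduct, Matrix.map_apply] using this
  by_cases hΔ1 : 1 ≤ Δ
  · -- main case
    have hcard : (Finset.univ.filter fun j => w j ≠ 0).card ≤ t := by
      calc (Finset.univ.filter fun j => w j ≠ 0).card
          ≤ (Finset.univ : Finset (Fin t)).card := Finset.card_filter_le _ _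
        _ = t := by simp
    rcases mainInduction s t Δ hΔ1 A hA t w hcard hw_nonneg hker with hL | hR
    · exfalso
      have hcmp : (t : ℝ) * ((((s+1).factorial : ℤ) : ℝ) * (Δ : ℝ) ^ s) ≤
          (t : ℝ) * (2 * s * Δ + 1)^s := by
        apply mul_le_mul_of_nonneg_left _ (by positivity)
        have h1 := factIneq s Δ hΔ1
        have h2 : ((((s+1).factorial : ℤ) * Δ^s : ℤ) : ℝ) ≤ (((2*(s:ℤ)*Δ+1)^s : ℤ) : ℝ) := by
          exact_mod_cast h1
        push_cast at h2
        exact_mod_cast h2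
      linarith
    · obtain ⟨r, h1, h2, h3, h4⟩ := hR
      refine ⟨r, h1, h2, ?_, h4⟩
      funext i
      have := h3 i
      simpa [Matrix.mulVec, dotProduct] using this
  · -- degenerate case : Δ ≤ 0, hence s = 0 or A = 0
    have hΔle : Δ ≤ 0 := by omega
    have hone : ((2 * (s:ℝ) * (Δ:ℝ) + 1))^s = 1 := by
      rcases Nat.eq_zero_or_pos s with rfl | hs
      · simp
      · have h0 : (0:ℤ) ≤ Δ := le_trans (abs_nonneg _) (hA ⟨0, hs⟩ ⟨0, ht⟩)
        have hΔ0 : Δ = 0 := le_antisymm hΔle h0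
        subst hΔ0
        norm_num
    have hAzero : ∀ v : Fin t → ℤ, A.mulVec v = 0 := by
      intro v
      funext i
      have h0 : (0:ℤ) ≤ Δ := le_trans (abs_nonneg _) (hA i ⟨0, ht⟩)
      have hΔ0 : Δ = 0 := le_antisymm hΔle h0
      have hAij : ∀ j, A i j = 0 := by
        intro j
        have := hA i j
        rw [hΔ0] at this
        exact abs_eq_zero.mp (le_antisymm this (abs_nonneg _))
      show ∑ j, A i j * v j = 0
      apply Finset.sum_eq_zero
      intro j _
      rw [hAij j, zero_mul]
    rw [hone, mul_one] at hw_big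
    obtain ⟨j, hj⟩ : ∃ j, 1 ≤ w j := by
      by_contra hno
      push_neg at hno
      have h1 : ∑ j, w j ≤ ∑ _j : Fin t, (1:ℝ) :=
        Finset.sum_le_sum (fun j _ => (hno j).le)
      simp only [Finset.sum_const, Finset.card_univ, Fintype.card_fin,
        nsmul_eq_mul, mul_one] at h1
      linarith
    refine ⟨Pi.single j 1, ?_, ?_, hAzero _, ?_⟩
    · intro h
      have := congrFun h j
      simp [Pi.single_eq_same] at this
    · intro j'
      rcases eq_or_ne j' j with rfl | h
      · simp
      · simp [Pi.single_eq_of_ne h]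
    · intro j'
      rcases eq_or_ne j' j with rfl | h
      · simpa using hj
      · rw [Pi.single_eq_of_ne h]
        simpa using hw_nonneg j'
end

section
/- Let C^1,...,C^n ∈ ℤ^{s₀×t} with entries bounded in absolute value by Δ, and let u_1,...,u_α ∈ ℤ^{nt}_{≥0} with ‖u_j‖₁ ≤ t(2sΔ+1)^s for all j. Writing C := [C^1 ··· C^n], there exists a permutation of the indices such that for every k ∈ {1,...,α}, ‖∑_{j=1}^k C u_j − (k/α) ∑_{j=1}^α C u_j‖_∞ ≤ s₀ · 2Δ · t(2sΔ+1)^s. -/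
open Finset
set_option linter.unusedSectionVars false
set_option maxHeartbeats 800000




variable {ι : Type*} [DecidableEq ι] [Fintype ι] {d : ℕ}

lemma kern_lemma (w : ι → Fin d → ℝ) (F : Finset ι) (hF : d + 1 < F.card) :
    ∃ g : ι → ℝ, (∀ a, a ∉ F → g a = 0) ∧ (∃ a ∈ F, g a ≠ 0) ∧
      (∑ a ∈ F, g a = 0) ∧ ∀ i, ∑ a ∈ F, g a * w a i = 0 := by
  classical
  set φ : ({a // a ∈ F} → ℝ) →ₗ[ℝ] (Fin d → ℝ) × ℝ :=
    { toFun := fun g => (fun i => ∑ a : {a // a ∈ F}, g a * w a i, ∑ a : {a // a ∈ F}, g a)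
      map_add' := by
        intro g h
        ext i
        · simp [add_mul, Finset.sum_add_distrib]
        · simp [Finset.sum_add_distrib]
      map_smul' := by
        intro c g
        ext i
        · simp [Finset.mul_sum, mul_assoc]
        · simp [Finset.mul_sum] } with hφ
  have hx : ∃ x : {a // a ∈ F} → ℝ, φ x = 0 ∧ x ≠ 0 := by
    by_contra h
    push_neg at h
    have hinj : Function.Injective φ := by
      rw [← LinearMap.ker_eq_bot, Submodule.eq_bot_iff]
      intro x hxk
      by_contra hne
      exact hne (h x (LinearMap.mem_ker.mp hxk))
    have h1 := LinearMap.finrank_le_finrank_of_injective hinj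
    have h2 : Module.finrank ℝ ({a // a ∈ F} → ℝ) = F.card := by
      simp [Module.finrank_pi]
    have h3 : Module.finrank ℝ ((Fin d → ℝ) × ℝ) = d + 1 := by
      simp [Module.finrank_prod]
    omega
  obtain ⟨x, hx0, hxne⟩ := hx
  refine ⟨fun a => if h : a ∈ F then x ⟨a, h⟩ else 0, ?_, ?_, ?_, ?_⟩
  · intro a ha; simp [ha]
  · obtain ⟨a, ha⟩ : ∃ a : {a // a ∈ F}, x a ≠ 0 := by
      by_contra h
      push_neg at h
      exact hxne (funext fun a => h a)
    exact ⟨a, a.2, by simp [ha]⟩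
  · rw [← Finset.sum_attach F fun a => if h : a ∈ F then x ⟨a, h⟩ else 0]
    have h := congrArg Prod.snd hx0
    simp only [φ, LinearMap.coe_mk, AddHom.coe_mk, Prod.snd_zero] at h
    rw [← h]
    exact Finset.sum_congr rfl fun a _ => by simp [a.2]
  · intro i
    rw [← Finset.sum_attach F fun a => (if h : a ∈ F then x ⟨a, h⟩ else 0) * w a i]
    have h := congrArg (fun p => p.1 i) hx0
    simp only [φ, LinearMap.coe_mk, AddHom.coe_mk, Prod.fst_zero, Pi.zero_apply] at h
    rw [← h]
    exact Finset.sum_congr rfl fun a _ => by simp [a.2]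

lemma counting (A : Finset ι) (lam : ι → ℝ)
    (h0 : ∀ a ∈ A, 0 ≤ lam a) (h1 : ∀ a ∈ A, lam a ≤ 1)
    (hsum : ∑ a ∈ A, lam a = (A.card : ℝ) - 1 - d)
    (hnz : ¬∃ a ∈ A, lam a = 0) :
    d + 2 ≤ (A.filter fun a => lam a ≠ 0 ∧ lam a ≠ 1).card := by
  classical
  push_neg at hnz
  set F := A.filter fun a => lam a ≠ 0 ∧ lam a ≠ 1 with hF
  have hcards : F.card + (A.filter fun a => ¬(lam a ≠ 0 ∧ lam a ≠ 1)).card = A.card :=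
    Finset.card_filter_add_card_filter_not _
  have hOsum : ∑ a ∈ A.filter (fun a => ¬(lam a ≠ 0 ∧ lam a ≠ 1)), lam a
      = ((A.filter fun a => ¬(lam a ≠ 0 ∧ lam a ≠ 1)).card : ℝ) := by
    rw [Finset.card_eq_sum_ones, Nat.cast_sum]
    refine Finset.sum_congr rfl fun a ha => ?_
    simp only [Finset.mem_filter] at ha
    obtain ⟨haA, hcond⟩ := ha
    push_neg at hcond
    by_cases h : lam a = 0
    · exact absurd h (hnz a haA)
    · simp [hcond h]
  have hsplit : ∑ a ∈ F, lam a + ∑ a ∈ A.filter (fun a => ¬(lam a ≠ 0 ∧ lam a ≠ 1)), lam a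
      = ∑ a ∈ A, lam a := Finset.sum_filter_add_sum_filter_not _ _ _
  have hFsum : ∑ a ∈ F, lam a = (F.card : ℝ) - 1 - d := by
    have : (A.card : ℝ) = (F.card : ℝ) + ((A.filter fun a => ¬(lam a ≠ 0 ∧ lam a ≠ 1)).card : ℝ) := by
      rw [← hcards]; push_cast; ring
    rw [hOsum, hsum, this] at hsplit
    linarith
  have hFne : F.Nonempty := by
    rcases F.eq_empty_or_nonempty with h | h
    · rw [h] at hFsum
      simp at hFsum
      have : (0:ℝ) ≤ d := Nat.cast_nonneg d
      linarith
    · exact h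
  have hpos : 0 < ∑ a ∈ F, lam a := by
    refine Finset.sum_pos ?_ hFne
    intro a ha
    simp only [hF, Finset.mem_filter] at ha
    exact lt_of_le_of_ne (h0 a ha.1) (Ne.symm ha.2.1)
  have : (d : ℝ) + 1 < F.card := by linarith [hFsum ▸ hpos]
  exact_mod_cast by exact_mod_cast Nat.lt_iff_add_one_le.mp (by exact_mod_cast this)

lemma zero_coord (w : ι → Fin d → ℝ) : ∀ m : ℕ, ∀ (A : Finset ι) (lam : ι → ℝ),
    (∀ a ∈ A, 0 ≤ lam a) → (∀ a ∈ A, lam a ≤ 1) →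
    (∑ a ∈ A, lam a = (A.card : ℝ) - 1 - d) → (∀ i, ∑ a ∈ A, lam a * w a i = 0) →
    ((A.filter fun a => lam a ≠ 0 ∧ lam a ≠ 1).card ≤ m) →
    ∃ lam' : ι → ℝ, (∀ a ∈ A, 0 ≤ lam' a) ∧ (∀ a ∈ A, lam' a ≤ 1) ∧
      (∑ a ∈ A, lam' a = (A.card : ℝ) - 1 - d) ∧ (∀ i, ∑ a ∈ A, lam' a * w a i = 0) ∧
      ∃ a ∈ A, lam' a = 0 := by
  intro m
  induction m using Nat.strong_induction_on with
  | _ m ih =>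
  intro A lam h0 h1 hsum hwsum hcard
  classical
  by_cases hz : ∃ a ∈ A, lam a = 0
  · exact ⟨lam, h0, h1, hsum, hwsum, hz⟩
  set F := A.filter fun a => lam a ≠ 0 ∧ lam a ≠ 1 with hFdef
  have hFA : F ⊆ A := Finset.filter_subset _ _
  have hcount : d + 2 ≤ F.card := counting A lam h0 h1 hsum hz
  have hfrac : ∀ a ∈ F, 0 < lam a ∧ lam a < 1 := by
    intro a ha
    simp only [hFdef, Finset.mem_filter] at ha
    exact ⟨lt_of_le_of_ne (h0 a ha.1) (Ne.symm ha.2.1), lt_of_le_of_ne (h1 a ha.1) ha.2.2⟩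
  obtain ⟨g, hg0, ⟨a₀, ha₀F, ha₀⟩, hgsum, hgw⟩ := kern_lemma w F (by omega)
  set N := F.filter fun a => g a ≠ 0 with hNdef
  have hNne : N.Nonempty := ⟨a₀, Finset.mem_filter.mpr ⟨ha₀F, ha₀⟩⟩
  set r : ι → ℝ := fun a => if 0 < g a then (1 - lam a) / g a else lam a / (-g a) with hrdef
  obtain ⟨b, hbN, hbmin⟩ := Finset.exists_min_image N r hNne
  have hrpos : ∀ a ∈ N, 0 < r a := by
    intro a ha
    simp only [hNdef, Finset.mem_filter] at ha
    obtain ⟨haF, hga⟩ := ha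
    obtain ⟨hl0, hl1⟩ := hfrac a haF
    by_cases h : 0 < g a
    · simp only [hrdef, if_pos h]
      exact div_pos (by linarith) h
    · simp only [hrdef, if_neg h]
      exact div_pos hl0 (by cases lt_or_gt_of_ne hga with
        | inl h' => linarith
        | inr h' => exact absurd h' h)
  set ε := r b with hεdef
  have hεpos : 0 < ε := hrpos b hbN
  set lam' : ι → ℝ := fun a => lam a + ε * g a with hlam'def
  -- facts about lam'
  have hsame : ∀ a, a ∉ N → lam' a = lam a := by
    intro a ha
    by_cases haF : a ∈ F
    · have : g a = 0 := by
        by_contra h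
        exact ha (Finset.mem_filter.mpr ⟨haF, h⟩)
      simp [hlam'def, this]
    · simp [hlam'def, hg0 a haF]
  have hbounds : ∀ a ∈ N, 0 ≤ lam' a ∧ lam' a ≤ 1 := by
    intro a ha
    have haN := ha
    simp only [hNdef, Finset.mem_filter] at ha
    obtain ⟨haF, hga⟩ := ha
    obtain ⟨hl0, hl1⟩ := hfrac a haF
    have hεle := hbmin a haN
    have hval : lam' a = lam a + ε * g a := rfl
    rw [hval]
    by_cases h : 0 < g a
    · constructor
      · nlinarith
      · have h2 : ε ≤ (1 - lam a) / g a := by simpa [hrdef, if_pos h] using hεle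
        have h3 := (le_div_iff₀ h).mp h2
        linarith
    · have hneg : g a < 0 := by
        cases lt_or_gt_of_ne hga with
        | inl h' => exact h'
        | inr h' => exact absurd h' h
      constructor
      · have h2 : ε ≤ lam a / (-g a) := by simpa [hrdef, if_neg h] using hεle
        have h3 := (le_div_iff₀ (by linarith : (0:ℝ) < -g a)).mp h2
        nlinarith
      · nlinarith
  have h0' : ∀ a ∈ A, 0 ≤ lam' a := by
    intro a ha
    by_cases haN : a ∈ N
    · exact (hbounds a haN).1
    · rw [hsame a haN]; exact h0 a ha
  have h1' : ∀ a ∈ A, lam' a ≤ 1 := by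
    intro a ha
    by_cases haN : a ∈ N
    · exact (hbounds a haN).2
    · rw [hsame a haN]; exact h1 a ha
  have hgA : ∑ a ∈ A, g a = 0 := by
    rw [← Finset.sum_subset hFA (fun a _ ha => hg0 a ha)]
    exact hgsum
  have hgwA : ∀ i, ∑ a ∈ A, g a * w a i = 0 := by
    intro i
    rw [← Finset.sum_subset hFA (fun a _ ha => by rw [hg0 a ha, zero_mul])]
    exact hgw i
  have hsum' : ∑ a ∈ A, lam' a = (A.card : ℝ) - 1 - d := by
    simp only [hlam'def]
    rw [Finset.sum_add_distrib, ← Finset.mul_sum, hgA, mul_zero, add_zero]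
    exact hsum
  have hwsum' : ∀ i, ∑ a ∈ A, lam' a * w a i = 0 := by
    intro i
    simp only [hlam'def]
    have : ∀ a, (lam a + ε * g a) * w a i = lam a * w a i + ε * (g a * w a i) := by
      intro a; ring
    simp only [this]
    rw [Finset.sum_add_distrib, ← Finset.mul_sum, hgwA i, mul_zero, add_zero]
    exact hwsum i
  -- lam' b is 0 or 1
  have hbval : lam' b = 0 ∨ lam' b = 1 := by
    have hbN' := hbN
    simp only [hNdef, Finset.mem_filter] at hbN'
    obtain ⟨hbF, hgb⟩ := hbN'
    by_cases h : 0 < g b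
    · right
      simp only [hlam'def, hεdef, hrdef, if_pos h]
      rw [div_mul_cancel₀ _ (ne_of_gt h)]
      ring
    · left
      have hneg : g b < 0 := by
        cases lt_or_gt_of_ne hgb with
        | inl h' => exact h'
        | inr h' => exact absurd h' h
      simp only [hlam'def, hεdef, hrdef, if_neg h]
      rw [div_mul_eq_mul_div, mul_comm, ← div_mul_eq_mul_div, div_neg, div_self hgb]
      ring
  -- new fractional set smaller
  have hsub : (A.filter fun a => lam' a ≠ 0 ∧ lam' a ≠ 1) ⊆ F.erase b := by
    intro a ha
    simp only [Finset.mem_filter] at ha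
    obtain ⟨haA, hne0, hne1⟩ := ha
    have haF : a ∈ F := by
      by_contra haF
      have hgaz : g a = 0 := hg0 a haF
      have : lam' a = lam a := by simp [hlam'def, hgaz]
      rw [this] at hne0 hne1
      exact haF (Finset.mem_filter.mpr ⟨haA, hne0, hne1⟩)
    refine Finset.mem_erase.mpr ⟨?_, haF⟩
    rintro rfl
    cases hbval with
    | inl h => exact hne0 h
    | inr h => exact hne1 h
  have hcard' : (A.filter fun a => lam' a ≠ 0 ∧ lam' a ≠ 1).card ≤ m - 1 := by
    have h1 := Finset.card_le_card hsub
    have h2 : (F.erase b).card = F.card - 1 :=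
      Finset.card_erase_of_mem (Finset.mem_filter.mp hbN).1
    omega
  exact ih (m - 1) (by omega) A lam' h0' h1' hsum' hwsum' hcard'
def Pne (w : ι → Fin d → ℝ) (A : Finset ι) : Prop :=
  ∃ lam : ι → ℝ, (∀ a ∈ A, 0 ≤ lam a) ∧ (∀ a ∈ A, lam a ≤ 1) ∧
    (∑ a ∈ A, lam a = (A.card : ℝ) - d) ∧ ∀ i, ∑ a ∈ A, lam a * w a i = 0

lemma pstep (w : ι → Fin d → ℝ) (A : Finset ι) (hA : d < A.card) (hP : Pne w A) :
    ∃ a ∈ A, Pne w (A.erase a) := by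
  classical
  obtain ⟨lam, h0, h1, hsum, hwsum⟩ := hP
  set f : ℝ := ((A.card : ℝ) - 1 - d) / ((A.card : ℝ) - d) with hfdef
  have hc2 : (0:ℝ) < (A.card : ℝ) - d := by
    have : (d:ℝ) < A.card := by exact_mod_cast hA
    linarith
  have hc1 : (0:ℝ) ≤ (A.card : ℝ) - 1 - d := by
    have : (d:ℝ) + 1 ≤ A.card := by exact_mod_cast hA
    linarith
  have hf0 : 0 ≤ f := div_nonneg hc1 (le_of_lt hc2)
  have hf1 : f ≤ 1 := by
    rw [hfdef, div_le_one hc2]; linarith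
  set mu : ι → ℝ := fun a => f * lam a with hmudef
  have hmu0 : ∀ a ∈ A, 0 ≤ mu a := fun a ha => mul_nonneg hf0 (h0 a ha)
  have hmu1 : ∀ a ∈ A, mu a ≤ 1 := by
    intro a ha
    calc f * lam a ≤ 1 * 1 := mul_le_mul hf1 (h1 a ha) (h0 a ha) zero_le_one
    _ = 1 := one_mul 1
  have hmusum : ∑ a ∈ A, mu a = (A.card : ℝ) - 1 - d := by
    simp only [hmudef]
    rw [← Finset.mul_sum, hsum, hfdef, div_mul_cancel₀ _ (ne_of_gt hc2)]
  have hmuwsum : ∀ i, ∑ a ∈ A, mu a * w a i = 0 := by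
    intro i
    simp only [hmudef, mul_assoc]
    rw [← Finset.mul_sum, hwsum i, mul_zero]
  obtain ⟨lam', h0', h1', hsum', hwsum', a, haA, ha0⟩ :=
    zero_coord w (A.filter fun a => mu a ≠ 0 ∧ mu a ≠ 1).card A mu hmu0 hmu1 hmusum hmuwsum le_rfl
  refine ⟨a, haA, lam', fun b hb => h0' b (Finset.mem_of_mem_erase hb),
    fun b hb => h1' b (Finset.mem_of_mem_erase hb), ?_, ?_⟩
  · have := Finset.sum_erase_add A lam' haA
    have hcard : ((A.erase a).card : ℝ) = (A.card : ℝ) - 1 := by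
      rw [Finset.card_erase_of_mem haA]
      have : 1 ≤ A.card := Finset.card_pos.mpr ⟨a, haA⟩
      push_cast [Nat.cast_sub this]
      ring
    rw [hcard]
    have h2 : ∑ b ∈ A.erase a, lam' b + lam' a = ∑ b ∈ A, lam' b := Finset.sum_erase_add A lam' haA
    rw [ha0, add_zero] at h2
    rw [h2, hsum']
  · intro i
    have h2 : ∑ b ∈ A.erase a, lam' b * w b i + lam' a * w a i = ∑ b ∈ A, lam' b * w b i :=
      Finset.sum_erase_add A _ haA
    rw [ha0, zero_mul, add_zero] at h2
    rw [h2, hwsum' i]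

lemma list_abs_bound (w : ι → Fin d → ℝ) (c : ℝ) (hw : ∀ a i, |w a i| ≤ c) :
    ∀ (l : List ι) (i : Fin d), |((l.map fun a => w a i).sum)| ≤ l.length * c := by
  intro l i
  induction l with
  | nil => simp
  | cons x xs ihl =>
    simp only [List.map_cons, List.sum_cons, List.length_cons]
    calc |w x i + (xs.map fun a => w a i).sum| ≤ |w x i| + |(xs.map fun a => w a i).sum| :=
          abs_add_le _ _
    _ ≤ c + xs.length * c := add_le_add (hw x i) ihl
    _ = (xs.length + 1) * c := by ring
    _ = ((xs.length : ℕ) + 1 : ℕ) * c := by push_cast; ring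

lemma total_bound (w : ι → Fin d → ℝ) (c : ℝ) (hw : ∀ a i, |w a i| ≤ c)
    (A : Finset ι) (hP : Pne w A) (i : Fin d) : |∑ a ∈ A, w a i| ≤ d * c := by
  obtain ⟨lam, h0, h1, hsum, hwsum⟩ := hP
  have key : ∑ a ∈ A, w a i = ∑ a ∈ A, (1 - lam a) * w a i := by
    have : ∑ a ∈ A, (1 - lam a) * w a i = ∑ a ∈ A, w a i - ∑ a ∈ A, lam a * w a i := by
      rw [← Finset.sum_sub_distrib]
      exact Finset.sum_congr rfl fun a _ => by ring
    rw [this, hwsum i, sub_zero]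
  rw [key]
  calc |∑ a ∈ A, (1 - lam a) * w a i| ≤ ∑ a ∈ A, |(1 - lam a) * w a i| :=
        Finset.abs_sum_le_sum_abs _ _
  _ ≤ ∑ a ∈ A, (1 - lam a) * c := by
      refine Finset.sum_le_sum fun a ha => ?_
      rw [abs_mul, abs_of_nonneg (by linarith [h1 a ha])]
      exact mul_le_mul_of_nonneg_left (hw a i) (by linarith [h1 a ha])
  _ = ((A.card : ℝ) - ∑ a ∈ A, lam a) * c := by
      have he : ∀ a : ι, (1 - lam a) * c = c - lam a * c := fun a => by ring
      simp only [he]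
      rw [Finset.sum_sub_distrib, Finset.sum_const, nsmul_eq_mul, ← Finset.sum_mul]
      ring
  _ = d * c := by rw [hsum]; ring

lemma list_prefix (w : ι → Fin d → ℝ) (c : ℝ) (hc : 0 ≤ c) (hw : ∀ a i, |w a i| ≤ c) :
    ∀ (m : ℕ) (A : Finset ι), A.card ≤ m → (d < A.card → Pne w A) →
    ∃ l : List ι, l.Nodup ∧ l.toFinset = A ∧
      ∀ (k : ℕ) (i : Fin d), |((l.take k).map fun a => w a i).sum| ≤ d * c := by
  classical
  intro m
  induction m with
  | zero =>
    intro A hA _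
    refine ⟨[], by simp, by simpa using (Finset.card_eq_zero.mp (Nat.le_zero.mp hA)).symm, ?_⟩
    intro k i; simp [Nat.cast_nonneg, mul_nonneg (Nat.cast_nonneg d) hc]
  | succ m ih =>
    intro A hA hP
    by_cases hd : d < A.card
    · obtain ⟨a, haA, hPe⟩ := pstep w A hd (hP hd)
      obtain ⟨l', hnd', htf', hpre'⟩ := ih (A.erase a)
        (by have := Finset.card_erase_of_mem haA; omega)
        (fun _ => hPe)
      have hunion : A.erase a ∪ {a} = A := by
        ext x
        simp only [Finset.mem_union, Finset.mem_erase, Finset.mem_singleton]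
        constructor
        · rintro (⟨_, hx⟩ | rfl) <;> [exact hx; exact haA]
        · intro hx
          by_cases hxa : x = a
          · exact Or.inr hxa
          · exact Or.inl ⟨hxa, hx⟩
      have hnd : (l' ++ [a]).Nodup := by
        rw [List.nodup_append]
        refine ⟨hnd', List.nodup_singleton a, ?_⟩
        intro x hx y hy hxy
        simp only [List.mem_singleton] at hy
        rw [hxy, hy] at hx
        have : a ∈ l'.toFinset := List.mem_toFinset.mpr hx
        rw [htf'] at this
        exact (Finset.notMem_erase a A) this
      have htf : (l' ++ [a]).toFinset = A := by
        rw [List.toFinset_append, htf', List.toFinset_cons, List.toFinset_nil]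
        simpa using hunion
      refine ⟨l' ++ [a], hnd, htf, ?_⟩
      intro k i
      by_cases hk : k ≤ l'.length
      · rw [List.take_append_of_le_length hk]
        exact hpre' k i
      · have hlen : (l' ++ [a]).length ≤ k := by
          simp only [List.length_append, List.length_singleton]; omega
        rw [List.take_of_length_le hlen]
        have hsum : ((l' ++ [a]).map fun x => w x i).sum = ∑ b ∈ A, w b i := by
          rw [← List.sum_toFinset _ hnd, htf]
        rw [hsum]
        exact total_bound w c hw A (hP hd) i
    · refine ⟨A.toList, Finset.nodup_toList A, Finset.toList_toFinset A, ?_⟩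
      intro k i
      calc |((A.toList.take k).map fun a => w a i).sum|
          ≤ (A.toList.take k).length * c := list_abs_bound w c hw _ i
      _ ≤ d * c := by
          refine mul_le_mul_of_nonneg_right ?_ hc
          have h1 : (A.toList.take k).length ≤ A.toList.length := by
            simp [List.length_take]
          have h2 : A.toList.length = A.card := Finset.length_toList A
          have : (A.toList.take k).length ≤ d := by omega
          exact_mod_cast this
lemma steinitz_perm {α d : ℕ} (w : Fin α → Fin d → ℝ) (c : ℝ) (hc : 0 ≤ c)
    (hw : ∀ a i, |w a i| ≤ c) (hzero : ∀ i, ∑ j, w j i = 0) :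
    ∃ π : Equiv.Perm (Fin α), ∀ k : ℕ, k ≤ α → ∀ i : Fin d,
      |∑ j ∈ Finset.univ.filter (fun j : Fin α => (j:ℕ) < k), w (π j) i| ≤ d * c := by
  classical
  have hPuniv : d < (Finset.univ : Finset (Fin α)).card → Pne w Finset.univ := by
    intro hd
    rw [Finset.card_univ, Fintype.card_fin] at hd
    have hα : 0 < α := lt_of_le_of_lt (Nat.zero_le d) hd
    have hαR : (0:ℝ) < α := by exact_mod_cast hα
    refine ⟨fun _ => ((α:ℝ) - d)/α, fun a _ => ?_, fun a _ => ?_, ?_, ?_⟩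
    · apply div_nonneg _ (le_of_lt hαR)
      have : (d:ℝ) < α := by exact_mod_cast hd
      linarith
    · rw [div_le_one hαR]
      have : (0:ℝ) ≤ d := Nat.cast_nonneg d
      linarith
    · rw [Finset.sum_const, Finset.card_univ, Fintype.card_fin, nsmul_eq_mul,
        mul_div_assoc', mul_comm, ← mul_div_assoc', div_self (ne_of_gt hαR), mul_one]
    · intro i
      simp only []
      rw [← Finset.mul_sum, hzero i, mul_zero]
  obtain ⟨l, hnd, htf, hpre⟩ := list_prefix w c hc hw α Finset.univ (by simp) hPuniv
  have hlen : l.length = α := by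
    rw [← List.toFinset_card_of_nodup hnd, htf, Finset.card_univ, Fintype.card_fin]
  have hinj : Function.Injective (fun j : Fin α => l.get (Fin.cast hlen.symm j)) := by
    intro a b hab
    have h1 : Function.Injective l.get := List.nodup_iff_injective_get.mp hnd
    have h2 := h1 hab
    simpa [Fin.ext_iff] using h2
  let π : Equiv.Perm (Fin α) := Equiv.ofBijective _ (Finite.injective_iff_bijective.mp hinj)
  have hπ : ∀ j : Fin α, π j = l.get (Fin.cast hlen.symm j) := fun j => rfl
  refine ⟨π, ?_⟩
  have hkey : ∀ k : ℕ, k ≤ α → ∀ i,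
      ∑ j ∈ Finset.univ.filter (fun j : Fin α => (j:ℕ) < k), w (π j) i
        = ((l.take k).map fun a => w a i).sum := by
    intro k
    induction k with
    | zero => intro _ i; simp
    | succ k ihk =>
      intro hk i
      have hk' : k < α := hk
      have hstep : Finset.univ.filter (fun j : Fin α => (j:ℕ) < k+1)
          = insert (⟨k, hk'⟩ : Fin α) (Finset.univ.filter fun j : Fin α => (j:ℕ) < k) := by
        ext j
        simp only [Finset.mem_insert, Finset.mem_filter, Finset.mem_univ, true_and, Fin.ext_iff]
        omega
      rw [hstep, Finset.sum_insert (by simp), ihk (le_of_lt hk')]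
      have hlt : k < (l.map fun a => w a i).length := by
        rw [List.length_map, hlen]; exact hk'
      have hts := List.sum_take_succ (l.map fun a => w a i) k hlt
      rw [← List.map_take, ← List.map_take] at hts
      rw [hts]
      have hget : (l.map fun a => w a i)[k] = w (l.get ⟨k, by rw [hlen]; exact hk'⟩) i := by
        simp [List.getElem_map]
      rw [hget, hπ]
      have : Fin.cast hlen.symm (⟨k, hk'⟩ : Fin α) = ⟨k, by rw [hlen]; exact hk'⟩ := rfl
      rw [this]
      ring
  intro k hk i
  rw [hkey k hk i]
  exact hpre k i
theorem stmt14 (s₀ s t n α : ℕ) (Δ : ℕ)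
    (C : Fin n → Matrix (Fin s₀) (Fin t) ℤ)
    (hC : ∀ j i l, |C j i l| ≤ (Δ:ℤ))
    (u : Fin α → Fin n → Fin t → ℤ)
    (hu_nonneg : ∀ j i l, 0 ≤ u j i l)
    (hu_norm : ∀ j, ∑ i, ∑ l, |u j i l| ≤ (t:ℤ) * (2 * s * Δ + 1)^s) :
    ∃ π : Equiv.Perm (Fin α), ∀ k : ℕ, 1 ≤ k → k ≤ α → ∀ i : Fin s₀,
      |((∑ j ∈ Finset.univ.filter (fun j : Fin α => (j:ℕ) < k),
            ∑ l, ((C l).mulVec (u (π j) l) i : ℝ))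
        - ((k:ℝ) / α) * ∑ j, ∑ l, ((C l).mulVec (u j l) i : ℝ))|
      ≤ (s₀:ℝ) * (2 * Δ) * (t * (2 * s * Δ + 1)^s) := by
  classical
  rcases Nat.eq_zero_or_pos α with hα0 | hα
  · subst hα0
    exact ⟨Equiv.refl _, fun k h1 h2 => by omega⟩
  have hαR : (0:ℝ) < α := by exact_mod_cast hα
  set M : ℤ := (Δ:ℤ) * ((t:ℤ) * (2 * s * Δ + 1)^s) with hM
  have hM0 : (0:ℤ) ≤ M := by positivity
  set Yz : Fin α → Fin s₀ → ℤ := fun j i => ∑ l, (C l).mulVec (u j l) i with hYz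
  have hmv : ∀ (l : Fin n) (j : Fin α) (i : Fin s₀),
      (C l).mulVec (u j l) i = ∑ p, C l i p * u j l p := by
    intro l j i
    simp [Matrix.mulVec, dotProduct]
  have hYbound : ∀ j i, |Yz j i| ≤ M := by
    intro j i
    calc |Yz j i| ≤ ∑ l, |(C l).mulVec (u j l) i| := Finset.abs_sum_le_sum_abs _ _
    _ ≤ ∑ l, ∑ p, |C l i p * u j l p| := by
        refine Finset.sum_le_sum fun l _ => ?_
        rw [hmv]
        exact Finset.abs_sum_le_sum_abs _ _
    _ ≤ ∑ l, ∑ p, (Δ:ℤ) * |u j l p| := by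
        refine Finset.sum_le_sum fun l _ => Finset.sum_le_sum fun p _ => ?_
        rw [abs_mul]
        exact mul_le_mul_of_nonneg_right (hC l i p) (abs_nonneg _)
    _ = (Δ:ℤ) * ∑ l, ∑ p, |u j l p| := by
        rw [Finset.mul_sum]
        exact Finset.sum_congr rfl fun l _ => by rw [Finset.mul_sum]
    _ ≤ M := by
        rw [hM]
        exact mul_le_mul_of_nonneg_left (hu_norm j) (Int.ofNat_nonneg Δ)
  set T : Fin s₀ → ℝ := fun i => ∑ j, (Yz j i : ℝ) with hT
  have hTbound : ∀ i, |T i| ≤ (α : ℝ) * (M:ℝ) := by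
    intro i
    calc |T i| ≤ ∑ j, |(Yz j i : ℝ)| := Finset.abs_sum_le_sum_abs _ _
    _ ≤ ∑ _j : Fin α, (M:ℝ) := by
        refine Finset.sum_le_sum fun j _ => ?_
        rw [← Int.cast_abs]
        exact_mod_cast hYbound j i
    _ = (α : ℝ) * M := by rw [Finset.sum_const, Finset.card_univ, Fintype.card_fin, nsmul_eq_mul]
  set w : Fin α → Fin s₀ → ℝ := fun j i => (Yz j i : ℝ) - (1/α) * T i with hwdef
  have hwb : ∀ j i, |w j i| ≤ 2 * (M:ℝ) := by
    intro j i
    calc |w j i| ≤ |(Yz j i : ℝ)| + |(1/α) * T i| := abs_sub _ _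
    _ ≤ (M:ℝ) + (1/α) * ((α:ℝ) * M) := by
        refine add_le_add ?_ ?_
        · rw [← Int.cast_abs]; exact_mod_cast hYbound j i
        · rw [abs_mul, abs_of_nonneg (by positivity : (0:ℝ) ≤ 1/(α:ℝ))]
          exact mul_le_mul_of_nonneg_left (hTbound i) (by positivity)
    _ = 2 * M := by field_simp; ring
  have hzero : ∀ i, ∑ j, w j i = 0 := by
    intro i
    simp only [hwdef]
    rw [Finset.sum_sub_distrib, Finset.sum_const, Finset.card_univ, Fintype.card_fin,
      nsmul_eq_mul, show ∑ x : Fin α, ((Yz x i : ℤ) : ℝ) = T i from rfl]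
    field_simp
    ring
  obtain ⟨π, hπ⟩ := steinitz_perm w (2 * (M:ℝ)) (by positivity) hwb hzero
  refine ⟨π, ?_⟩
  intro k h1k hkα i
  have hcardf : (Finset.univ.filter fun j : Fin α => (j:ℕ) < k).card = k := by
    have hmap : (Finset.univ.filter fun j : Fin α => (j:ℕ) < k)
        = Finset.map (Fin.castLEEmb hkα) Finset.univ := by
      ext j
      simp only [Finset.mem_filter, Finset.mem_univ, true_and, Finset.mem_map]
      constructor
      · intro hj
        exact ⟨⟨(j:ℕ), hj⟩, by ext; simp⟩
      · rintro ⟨x, rfl⟩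
        simpa using x.isLt
    rw [hmap, Finset.card_map, Finset.card_univ, Fintype.card_fin]
  have he1 : ∀ j : Fin α, ∑ l, ((C l).mulVec (u j l) i : ℝ) = (Yz j i : ℝ) := by
    intro j
    rw [hYz]
    push_cast
    rfl
  have hgoal_eq : (∑ j ∈ Finset.univ.filter (fun j : Fin α => (j:ℕ) < k),
        ∑ l, ((C l).mulVec (u (π j) l) i : ℝ))
        - ((k:ℝ) / α) * ∑ j, ∑ l, ((C l).mulVec (u j l) i : ℝ)
      = ∑ j ∈ Finset.univ.filter (fun j : Fin α => (j:ℕ) < k), w (π j) i := by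
    simp only [he1]
    simp only [hwdef]
    rw [Finset.sum_sub_distrib, Finset.sum_const, hcardf, nsmul_eq_mul,
      show ∑ x : Fin α, ((Yz x i : ℤ) : ℝ) = T i from rfl]
    ring
  rw [hgoal_eq]
  calc |∑ j ∈ Finset.univ.filter (fun j : Fin α => (j:ℕ) < k), w (π j) i|
      ≤ (s₀ : ℝ) * (2 * (M:ℝ)) := hπ k hkα i
  _ = (s₀:ℝ) * (2 * Δ) * (t * (2 * s * Δ + 1)^s) := by
      rw [hM]
      push_cast
      ring
end

section
/- Let V ⊆ ℝ^{s₀} be a linear subspace, let X := (R·[−1,1]^{s₀}) ∩ V and Y := [−ω,ω]^{s₀} for reals R, ω ≥ 0. Then the number of integer points in X + Y is at most 36·(s₀^{1/2}(R+ω+1/2))^{dim V}·(s₀^{1/2}(ω+1/2))^{s₀−dim V}. -/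
open Real MeasureTheory ENNReal Module Pointwise

lemma aux_gamma_bound : ∀ n : ℕ, Real.sqrt π ^ n / Real.Gamma (n / 2 + 1) ≤ 6 := by
  have hπ : (0:ℝ) < π := Real.pi_pos
  have hsπ : (0:ℝ) < Real.sqrt π := Real.sqrt_pos.mpr hπ
  have hsq : Real.sqrt π ^ 2 = π := Real.sq_sqrt hπ.le
  have hrec : ∀ m : ℕ, Real.sqrt π ^ (m + 2) / Real.Gamma ((m + 2 : ℕ) / 2 + 1)
      = (Real.sqrt π ^ m / Real.Gamma (m / 2 + 1)) * (π / ((m : ℝ) / 2 + 1)) := by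
    intro m
    have h1 : ((m + 2 : ℕ) : ℝ) / 2 + 1 = ((m : ℝ) / 2 + 1) + 1 := by push_cast; ring
    have h0 : ((m : ℝ) / 2 + 1) ≠ 0 := by positivity
    have hG : Real.Gamma (((m + 2 : ℕ) : ℝ) / 2 + 1) = ((m : ℝ) / 2 + 1) * Real.Gamma ((m : ℝ) / 2 + 1) := by
      rw [h1, Real.Gamma_add_one h0]
    have hGpos : 0 < Real.Gamma ((m : ℝ) / 2 + 1) := Real.Gamma_pos_of_pos (by positivity)
    rw [hG]
    have : Real.sqrt π ^ (m+2) = Real.sqrt π ^ m * π := by rw [pow_add, hsq]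
    rw [this]
    field_simp
  have hG12 : Real.Gamma (1/2 : ℝ) = Real.sqrt π := Real.Gamma_one_half_eq
  have g0 : Real.sqrt π ^ (0:ℕ) / Real.Gamma ((0:ℕ) / 2 + 1) = 1 := by
    norm_num [Real.Gamma_one]
  have g1 : Real.sqrt π ^ (1:ℕ) / Real.Gamma ((1:ℕ) / 2 + 1) = 2 := by
    have : ((1:ℕ):ℝ) / 2 + 1 = (1/2 : ℝ) + 1 := by norm_num
    rw [this, Real.Gamma_add_one (by norm_num), hG12]
    field_simp
  have g2 : Real.sqrt π ^ (2:ℕ) / Real.Gamma ((2:ℕ) / 2 + 1) = π := by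
    rw [show (2:ℕ) = 0 + 2 from rfl, hrec 0, g0]
    norm_num
  have g3 : Real.sqrt π ^ (3:ℕ) / Real.Gamma ((3:ℕ) / 2 + 1) = 4 * π / 3 := by
    rw [show Real.sqrt π ^ (3:ℕ) / Real.Gamma ((3:ℕ) / 2 + 1) = Real.sqrt π ^ (1 + 2) / Real.Gamma (((1 + 2 : ℕ) : ℝ) / 2 + 1) from rfl, hrec 1, g1]
    norm_num
    ring
  have g4 : Real.sqrt π ^ (4:ℕ) / Real.Gamma ((4:ℕ) / 2 + 1) = π ^ 2 / 2 := by
    rw [show (4:ℕ) = 2 + 2 from rfl, hrec 2, g2]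
    norm_num
    ring
  have g5 : Real.sqrt π ^ (5:ℕ) / Real.Gamma ((5:ℕ) / 2 + 1) = 8 * π ^ 2 / 15 := by
    rw [show (5:ℕ) = 3 + 2 from rfl, hrec 3, g3]
    norm_num
    ring
  have g6 : Real.sqrt π ^ (6:ℕ) / Real.Gamma ((6:ℕ) / 2 + 1) = π ^ 3 / 6 := by
    rw [show (6:ℕ) = 4 + 2 from rfl, hrec 4, g4]
    norm_num
    ring
  have hπ315 : π < 3.15 := Real.pi_lt_d2
  intro n
  induction n using Nat.strong_induction_on with
  | _ n ih =>
    match n, ih with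
    | 0, _ => rw [g0]; norm_num
    | 1, _ => rw [g1]; norm_num
    | 2, _ => rw [g2]; nlinarith
    | 3, _ => rw [g3]; nlinarith
    | 4, _ => rw [g4]; nlinarith
    | 5, _ => rw [g5]; nlinarith
    | 6, _ => rw [g6]; nlinarith
    | (m+7), ih =>
      rw [show m + 7 = (m+5) + 2 from rfl, hrec (m+5)]
      have ihm := ih (m+5) (by omega)
      have hge : (0:ℝ) ≤ Real.sqrt π ^ (m+5) / Real.Gamma ((m+5:ℕ) / 2 + 1) :=
        div_nonneg (pow_nonneg (Real.sqrt_nonneg _) _)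
          (Real.Gamma_pos_of_pos (by positivity)).le
      have hb : ((m+5:ℕ):ℝ) / 2 + 1 ≥ 3.5 := by push_cast; nlinarith [Nat.cast_nonneg (α := ℝ) m]
      have hfac : π / (((m+5:ℕ):ℝ) / 2 + 1) ≤ 1 := by
        rw [div_le_one (by nlinarith)]
        nlinarith
      have hfac0 : 0 ≤ π / (((m+5:ℕ):ℝ) / 2 + 1) := by positivity
      nlinarith

lemma aux_ball_vol {ι : Type*} [Fintype ι] {r : ℝ} (hr : 0 ≤ r) :
    volume (Metric.closedBall (0 : EuclideanSpace ℝ ι) r)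
      ≤ ENNReal.ofReal (6 * r ^ Fintype.card ι) := by
  cases isEmpty_or_nonempty ι with
  | inl h =>
    have h1 : volume (Set.univ : Set (EuclideanSpace ℝ ι)) = 1 := by
      have h2 := (EuclideanSpace.volume_preserving_symm_measurableEquiv_toLp ι).measure_preimage
        (MeasurableSet.univ (α := ι → ℝ)).nullMeasurableSet
      have h3 : (volume (Set.univ : Set (ι → ℝ))) = 1 := by
        simp [MeasureTheory.volume_pi, MeasureTheory.Measure.pi_univ]
      rw [Set.preimage_univ, h3] at h2
      exact h2
    calc volume (Metric.closedBall (0 : EuclideanSpace ℝ ι) r) ≤ volume Set.univ :=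
          measure_mono (Set.subset_univ _)
      _ = 1 := h1
      _ ≤ ENNReal.ofReal (6 * r ^ Fintype.card ι) := by
          rw [Fintype.card_eq_zero]
          simp only [pow_zero, mul_one]
          rw [show (1 : ℝ≥0∞) = ENNReal.ofReal 1 by simp]
          exact ENNReal.ofReal_le_ofReal (by norm_num)
  | inr h =>
    rw [EuclideanSpace.volume_closedBall]
    calc ENNReal.ofReal r ^ Fintype.card ι *
          ENNReal.ofReal (Real.sqrt π ^ Fintype.card ι / Real.Gamma (Fintype.card ι / 2 + 1))
        ≤ ENNReal.ofReal r ^ Fintype.card ι * ENNReal.ofReal 6 :=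
          mul_le_mul_right (ENNReal.ofReal_le_ofReal (aux_gamma_bound _)) _
      _ = ENNReal.ofReal (6 * r ^ Fintype.card ι) := by
          rw [← ENNReal.ofReal_pow hr, ← ENNReal.ofReal_mul (by positivity), mul_comm]

lemma aux_adapted_basis (n : ℕ) (V' : Submodule ℝ (EuclideanSpace ℝ (Fin n))) :
    ∃ b : OrthonormalBasis (Fin n) ℝ (EuclideanSpace ℝ (Fin n)),
      (∀ i : Fin n, (i : ℕ) < finrank ℝ V' → b i ∈ V') ∧
      (∀ i : Fin n, ¬ ((i : ℕ) < finrank ℝ V') → b i ∈ V'ᗮ) := by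
  classical
  set E := EuclideanSpace ℝ (Fin n)
  set d := finrank ℝ V' with hdd
  have hd : d ≤ n := by
    simpa [finrank_euclideanSpace] using Submodule.finrank_le V'
  let bV := stdOrthonormalBasis ℝ V'
  let v : Fin n → E := fun i => if h : (i : ℕ) < d then (bV ⟨i, h⟩ : E) else 0
  set s : Set (Fin n) := {i | (i : ℕ) < d} with hs
  have hbVE : Orthonormal ℝ (fun j : Fin d => (bV j : E)) :=
    bV.orthonormal.comp_linearIsometry V'.subtypeₗᵢ
  have hon : Orthonormal ℝ (s.restrict v) := by
    have : s.restrict v = (fun j : Fin d => (bV j : E)) ∘ (fun j : s => (⟨(j : Fin n), j.2⟩ : Fin d)) := by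
      funext j
      simp only [Set.restrict_apply, Function.comp_apply, v]
      exact dif_pos j.2
    rw [this]
    exact hbVE.comp _ (fun a b hab => by
      simpa [Subtype.ext_iff, Fin.ext_iff] using congrArg Fin.val hab)
  have hcard : finrank ℝ E = Fintype.card (Fin n) := by
    simp [E, finrank_euclideanSpace]
  obtain ⟨b, hb⟩ := hon.exists_orthonormalBasis_extension_of_card_eq hcard
  refine ⟨b, fun i hi => ?_, fun i hi => ?_⟩
  · rw [hb i hi]
    simp only [v]
    rw [dif_pos hi]
    exact (bV ⟨i, hi⟩).2
  · rw [Submodule.mem_orthogonal]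
    intro x hx
    have hxsum : x = ∑ j : Fin d, bV.repr ⟨x, hx⟩ j • (bV j : E) := by
      have := bV.sum_repr ⟨x, hx⟩
      calc x = ((⟨x, hx⟩ : V') : E) := rfl
        _ = ((∑ j, bV.repr ⟨x, hx⟩ j • bV j : V') : E) := by rw [this]
        _ = ∑ j : Fin d, bV.repr ⟨x, hx⟩ j • (bV j : E) := by push_cast; rfl
    rw [hxsum, sum_inner]
    refine Finset.sum_eq_zero fun j _ => ?_
    rw [real_inner_smul_left]
    have hj : ((⟨(j : ℕ), lt_of_lt_of_le j.2 hd⟩ : Fin n) : ℕ) < d := j.2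
    have hbj : (bV j : E) = b ⟨(j : ℕ), lt_of_lt_of_le j.2 hd⟩ := by
      rw [hb _ hj]
      simp only [v]
      rw [dif_pos hj]
    rw [hbj]
    rw [b.orthonormal.2 (by
      intro hEq
      exact hi (hEq ▸ hj))]
    ring

theorem stmt15 (s₀ : ℕ) (V : Submodule ℝ (Fin s₀ → ℝ)) (R ω : ℝ)
    (hR : 0 ≤ R) (hω : 0 ≤ ω)
    (X : Set (Fin s₀ → ℝ)) (hX : X = {x | x ∈ V ∧ ∀ i, |x i| ≤ R})
    (Y : Set (Fin s₀ → ℝ)) (hY : Y = {y | ∀ i, |y i| ≤ ω}) :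
    ((Set.ncard {z : Fin s₀ → ℤ | (fun i => (z i : ℝ)) ∈ X + Y}) : ℝ)
      ≤ 36 * (Real.sqrt s₀ * (R + ω + 1/2))^(Module.finrank ℝ V)
          * (Real.sqrt s₀ * (ω + 1/2))^(s₀ - Module.finrank ℝ V) := by
  classical
  set d := Module.finrank ℝ V with hd
  set E := EuclideanSpace ℝ (Fin s₀) with hE
  have hds : d ≤ s₀ := by
    simpa [Module.finrank_fin_fun] using Submodule.finrank_le V
  -- the space as Euclidean space
  let toE : (Fin s₀ → ℝ) → E := fun u => WithLp.toLp 2 u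
  let lin : E ≃ₗ[ℝ] (Fin s₀ → ℝ) := WithLp.linearEquiv 2 ℝ (Fin s₀ → ℝ)
  let V' : Submodule ℝ E := V.comap lin.toLinearMap
  have hV'rank : finrank ℝ V' = d := by
    show finrank ℝ (Submodule.comap (lin : E →ₗ[ℝ] (Fin s₀ → ℝ)) V) = d
    rw [Submodule.comap_equiv_eq_map_symm]
    exact LinearEquiv.finrank_map_eq lin.symm V
  obtain ⟨b, hbV, hbO⟩ := aux_adapted_basis s₀ V'
  rw [hV'rank] at hbV hbO
  -- predicates and radii
  let p : Fin s₀ → Prop := fun i => (i : ℕ) < d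
  let E₁ := EuclideanSpace ℝ {i : Fin s₀ // p i}
  let E₂ := EuclideanSpace ℝ {i : Fin s₀ // ¬ p i}
  set r₁ : ℝ := Real.sqrt s₀ * (R + ω + 1/2) with hr₁def
  set r₂ : ℝ := Real.sqrt s₀ * (ω + 1/2) with hr₂def
  have hr₁ : 0 ≤ r₁ := by positivity
  have hr₂ : 0 ≤ r₂ := by positivity
  have hc₁ : Fintype.card {i : Fin s₀ // p i} = d := by
    have : {i : Fin s₀ // p i} ≃ Fin d :=
      { toFun := fun i => ⟨(i.1 : ℕ), i.2⟩
        invFun := fun j => ⟨⟨(j : ℕ), lt_of_lt_of_le j.2 hds⟩, j.2⟩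
        left_inv := fun i => by ext; rfl
        right_inv := fun j => rfl }
    rw [Fintype.card_congr this, Fintype.card_fin]
  have hc₂ : Fintype.card {i : Fin s₀ // ¬ p i} = s₀ - d := by
    rw [Fintype.card_subtype_compl, hc₁, Fintype.card_fin]
  -- the comparison set
  let res : ∀ (q : Fin s₀ → Prop), (EuclideanSpace ℝ (Fin s₀)) → EuclideanSpace ℝ {i : Fin s₀ // q i} :=
    fun q u => WithLp.toLp 2 (fun i => u i.1)
  let Φ : (Fin s₀ → ℝ) → E₁ × E₂ := fun u =>
    (res p (b.repr (toE u)), res (fun i => ¬ p i) (b.repr (toE u)))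
  have hΦ : MeasurePreserving Φ volume volume := by
    have h₀ := (EuclideanSpace.volume_preserving_symm_measurableEquiv_toLp (Fin s₀)).symm
    have h₁ := b.measurePreserving_repr
    have h₂ := EuclideanSpace.volume_preserving_symm_measurableEquiv_toLp (Fin s₀)
    have h₃ := MeasureTheory.volume_preserving_piEquivPiSubtypeProd (fun _ : Fin s₀ => ℝ) p
    have h₄ := ((EuclideanSpace.volume_preserving_symm_measurableEquiv_toLp {i : Fin s₀ // p i}).symm).prod
        ((EuclideanSpace.volume_preserving_symm_measurableEquiv_toLp {i : Fin s₀ // ¬ p i}).symm)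
    exact ((h₄.comp h₃).comp ((h₂.comp h₁).comp h₀))
  let S : Set (Fin s₀ → ℝ) :=
    Φ ⁻¹' ((Metric.closedBall 0 r₁) ×ˢ (Metric.closedBall 0 r₂))
  have hSvol : volume S ≤ ENNReal.ofReal (36 * r₁ ^ d * r₂ ^ (s₀ - d)) := by
    have hmeas : MeasurableSet ((Metric.closedBall (0:E₁) r₁) ×ˢ (Metric.closedBall (0:E₂) r₂)) :=
      (Metric.isClosed_closedBall.measurableSet).prod (Metric.isClosed_closedBall.measurableSet)
    rw [show volume S = volume ((Metric.closedBall (0:E₁) r₁) ×ˢ (Metric.closedBall (0:E₂) r₂))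
        from hΦ.measure_preimage hmeas.nullMeasurableSet]
    rw [Measure.volume_eq_prod, Measure.prod_prod]
    calc volume (Metric.closedBall (0:E₁) r₁) * volume (Metric.closedBall (0:E₂) r₂)
        ≤ ENNReal.ofReal (6 * r₁ ^ Fintype.card {i : Fin s₀ // p i}) *
          ENNReal.ofReal (6 * r₂ ^ Fintype.card {i : Fin s₀ // ¬ p i}) :=
          mul_le_mul' (aux_ball_vol hr₁) (aux_ball_vol hr₂)
      _ = ENNReal.ofReal (36 * r₁ ^ d * r₂ ^ (s₀ - d)) := by
          rw [hc₁, hc₂, ← ENNReal.ofReal_mul (by positivity)]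
          ring_nf
  -- the integer points
  set T : Set (Fin s₀ → ℤ) := {z : Fin s₀ → ℤ | (fun i => (z i : ℝ)) ∈ X + Y} with hT
  -- norm bounds
  have hnormE : ∀ (c : ℝ) (u : E), 0 ≤ c → (∀ i, |u i| ≤ c) → ‖u‖ ≤ Real.sqrt s₀ * c := by
    intro c u hc hu
    have hn : ‖u‖ = Real.sqrt (∑ i, ‖u i‖ ^ 2) := EuclideanSpace.norm_eq u
    rw [hn]
    have h2 : ∑ i, ‖u i‖ ^ 2 ≤ (s₀ : ℝ) * c ^ 2 := by
      calc ∑ i, ‖u i‖ ^ 2 ≤ ∑ _i : Fin s₀, c ^ 2 := Finset.sum_le_sum fun i _ => by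
            have := hu i
            rw [Real.norm_eq_abs]
            nlinarith [abs_nonneg (u i)]
        _ = (s₀ : ℝ) * c ^ 2 := by simp [Finset.sum_const, Finset.card_univ]
    calc Real.sqrt (∑ i, ‖u i‖ ^ 2) ≤ Real.sqrt ((s₀ : ℝ) * c ^ 2) := Real.sqrt_le_sqrt h2
      _ = Real.sqrt s₀ * c := by
          rw [Real.sqrt_mul (Nat.cast_nonneg s₀), Real.sqrt_sq hc]
  have hsubnorm : ∀ (q : Fin s₀ → Prop) [DecidablePred q] (u : E),
      ‖res q u‖ ≤ ‖u‖ := by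
    intro q _ u
    have hn1 : ‖res q u‖
        = Real.sqrt (∑ i : {i : Fin s₀ // q i}, ‖u i.1‖ ^ 2) := EuclideanSpace.norm_eq _
    have hn2 : ‖u‖ = Real.sqrt (∑ i, ‖u i‖ ^ 2) := EuclideanSpace.norm_eq u
    rw [hn1, hn2]
    apply Real.sqrt_le_sqrt
    have he : ∑ i : {i : Fin s₀ // q i}, ‖u i.1‖ ^ 2
        = ∑ i ∈ Finset.univ.filter q, ‖u i‖ ^ 2 :=
      (Finset.sum_subtype (Finset.univ.filter q) (by simp) (fun i => ‖u i‖ ^ 2)).symm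
    rw [he]
    exact Finset.sum_le_sum_of_subset_of_nonneg (Finset.filter_subset _ _)
      (fun i _ _ => by positivity)
  -- each integer point's cube lies in S
  let cube : (Fin s₀ → ℤ) → Set (Fin s₀ → ℝ) := fun z =>
    Set.pi Set.univ fun i => Set.Ioo ((z i : ℝ) - 1/2) ((z i : ℝ) + 1/2)
  have hcube_sub : ∀ z ∈ T, cube z ⊆ S := by
    intro z hz w hw
    obtain ⟨x, hxX, y, hyY, hxy⟩ := Set.mem_add.mp hz
    rw [hX] at hxX
    rw [hY] at hyY
    obtain ⟨hxV, hxR⟩ := hxX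
    -- the "small" part
    set u : Fin s₀ → ℝ := w - x with hu
    have hwu : w = x + u := by rw [hu]; ring
    have hub : ∀ i, |u i| ≤ ω + 1/2 := by
      intro i
      have hzi : x i + y i = (z i : ℝ) := congrFun hxy i
      have hwi := hw i (Set.mem_univ i)
      simp only [Set.mem_Ioo] at hwi
      have : u i = y i + (w i - (z i : ℝ)) := by
        simp only [hu, Pi.sub_apply]
        linarith
      rw [this]
      have h1 := hyY i
      have h2 : |w i - (z i : ℝ)| ≤ 1/2 := by
        rw [abs_le]; constructor <;> linarith [hwi.1, hwi.2]
      calc |y i + (w i - (z i : ℝ))| ≤ |y i| + |w i - (z i : ℝ)| := abs_add_le _ _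
        _ ≤ ω + 1/2 := add_le_add h1 h2
    -- norms of the two pieces
    have hxE : ‖toE x‖ ≤ Real.sqrt s₀ * R := hnormE R (toE x) hR hxR
    have huE : ‖toE u‖ ≤ Real.sqrt s₀ * (ω + 1/2) := hnormE (ω + 1/2) (toE u) (by linarith) hub
    -- x lies in V'
    have hxV' : toE x ∈ V' := hxV
    -- repr of x vanishes on non-p coordinates
    have hreprx : ∀ i : Fin s₀, ¬ p i → b.repr (toE x) i = 0 := by
      intro i hi
      rw [b.repr_apply_apply]
      exact Submodule.inner_left_of_mem_orthogonal hxV' (hbO i hi)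
    -- additivity
    have hsplit : b.repr (toE w) = b.repr (toE x) + b.repr (toE u) := by
      have : toE w = toE x + toE u := by rw [hwu]; rfl
      rw [this, map_add]
    -- componentwise facts
    have hres_add : ∀ (q : Fin s₀ → Prop) (a c : EuclideanSpace ℝ (Fin s₀)),
        res q (a + c) = res q a + res q c := by
      intro q a c
      ext i
      simp [res]
    constructor
    · -- first component
      show res p (b.repr (toE w)) ∈ Metric.closedBall 0 r₁
      rw [mem_closedBall_zero_iff]
      rw [hsplit, hres_add]
      calc ‖res p (b.repr (toE x)) + res p (b.repr (toE u))‖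
          ≤ ‖res p (b.repr (toE x))‖ + ‖res p (b.repr (toE u))‖ := norm_add_le _ _
        _ ≤ ‖b.repr (toE x)‖ + ‖b.repr (toE u)‖ :=
            add_le_add (hsubnorm p _) (hsubnorm p _)
        _ = ‖toE x‖ + ‖toE u‖ := by rw [b.repr.norm_map, b.repr.norm_map]
        _ ≤ Real.sqrt s₀ * R + Real.sqrt s₀ * (ω + 1/2) := add_le_add hxE huE
        _ = r₁ := by rw [hr₁def]; ring
    · -- second component
      show res (fun i => ¬ p i) (b.repr (toE w)) ∈ Metric.closedBall 0 r₂
      rw [mem_closedBall_zero_iff]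
      rw [hsplit, hres_add]
      have hzero : res (fun i => ¬ p i) (b.repr (toE x)) = 0 := by
        ext i
        exact hreprx i.1 i.2
      rw [hzero, zero_add]
      calc ‖res (fun i => ¬ p i) (b.repr (toE u))‖ ≤ ‖b.repr (toE u)‖ := hsubnorm _ _
        _ = ‖toE u‖ := b.repr.norm_map _
        _ ≤ r₂ := by rw [hr₂def]; exact huE
  -- T is finite
  have hTfin : T.Finite := by
    apply Set.Finite.subset
      (Set.Finite.pi (fun _ : Fin s₀ => Set.finite_Icc (-⌈R + ω⌉) ⌈R + ω⌉))
    intro z hz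
    obtain ⟨x, hxX, y, hyY, hxy⟩ := Set.mem_add.mp hz
    rw [hX] at hxX
    rw [hY] at hyY
    intro i _
    have hzi : x i + y i = (z i : ℝ) := congrFun hxy i
    have h1 : |(z i : ℝ)| ≤ R + ω := by
      rw [← hzi]
      calc |x i + y i| ≤ |x i| + |y i| := abs_add_le _ _
        _ ≤ R + ω := add_le_add (hxX.2 i) (hyY i)
    rw [abs_le] at h1
    have hceil : (R + ω) ≤ (⌈R + ω⌉ : ℝ) := Int.le_ceil _
    constructor
    · have : ((-⌈R + ω⌉ : ℤ) : ℝ) ≤ (z i : ℝ) := by push_cast; linarith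
      exact_mod_cast this
    · have : ((z i : ℝ)) ≤ ((⌈R + ω⌉ : ℤ) : ℝ) := by linarith
      exact_mod_cast this
  -- counting
  have hcount : (hTfin.toFinset.card : ℝ≥0∞) ≤ volume S := by
    have hmeascube : ∀ z, MeasurableSet (cube z) := fun z =>
      MeasurableSet.univ_pi fun i => measurableSet_Ioo
    have hvolcube : ∀ z : Fin s₀ → ℤ, volume (cube z) = 1 := by
      intro z
      rw [show cube z = Set.pi Set.univ fun i => Set.Ioo ((z i : ℝ) - 1/2) ((z i : ℝ) + 1/2)
        from rfl]
      rw [volume_pi_pi]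
      have : ∀ i : Fin s₀, volume (Set.Ioo ((z i : ℝ) - 1/2) ((z i : ℝ) + 1/2)) = 1 := by
        intro i
        rw [Real.volume_Ioo]
        norm_num
      rw [Finset.prod_congr rfl (fun i _ => this i)]
      simp
    have hdisj : (hTfin.toFinset : Set (Fin s₀ → ℤ)).Pairwise (Function.onFun Disjoint cube) := by
      intro z1 _ z2 _ hne
      rw [Function.onFun]
      rw [Set.disjoint_left]
      intro v hv1 hv2
      obtain ⟨i, hi⟩ := Function.ne_iff.mp hne
      have h1 := hv1 i (Set.mem_univ i)
      have h2 := hv2 i (Set.mem_univ i)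
      simp only [Set.mem_Ioo] at h1 h2
      have : |((z1 i : ℝ)) - (z2 i : ℝ)| < 1 := by
        rw [abs_lt]; constructor <;> linarith
      have hge : (1 : ℝ) ≤ |((z1 i : ℝ)) - (z2 i : ℝ)| := by
        have : (1 : ℤ) ≤ |z1 i - z2 i| := Int.one_le_abs (sub_ne_zero.mpr hi)
        calc (1:ℝ) = ((1:ℤ) : ℝ) := by norm_num
          _ ≤ ((|z1 i - z2 i| : ℤ) : ℝ) := by exact_mod_cast this
          _ = |((z1 i : ℝ)) - (z2 i : ℝ)| := by rw [Int.cast_abs]; push_cast; ring_nf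
      linarith
    calc (hTfin.toFinset.card : ℝ≥0∞)
        = ∑ z ∈ hTfin.toFinset, volume (cube z) := by
          simp [hvolcube]
      _ = volume (⋃ z ∈ hTfin.toFinset, cube z) :=
          (measure_biUnion_finset hdisj (fun z _ => hmeascube z)).symm
      _ ≤ volume S := by
          apply measure_mono
          apply Set.iUnion₂_subset
          intro z hz
          exact hcube_sub z (by simpa using hz)
  -- conclude
  have hfinal : (hTfin.toFinset.card : ℝ) ≤ 36 * r₁ ^ d * r₂ ^ (s₀ - d) := by
    have h1 : (hTfin.toFinset.card : ℝ≥0∞) ≤ ENNReal.ofReal (36 * r₁ ^ d * r₂ ^ (s₀ - d)) :=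
      le_trans hcount hSvol
    rw [show ((hTfin.toFinset.card : ℝ≥0∞)) = ENNReal.ofReal (hTfin.toFinset.card : ℝ) by
      simp] at h1
    exact (ENNReal.ofReal_le_ofReal_iff (by positivity)).mp h1
  rw [Set.ncard_eq_toFinset_card T hTfin]
  calc (hTfin.toFinset.card : ℝ) ≤ 36 * r₁ ^ d * r₂ ^ (s₀ - d) := hfinal
    _ = 36 * (Real.sqrt s₀ * (R + ω + 1/2))^(Module.finrank ℝ V)
          * (Real.sqrt s₀ * (ω + 1/2))^(s₀ - Module.finrank ℝ V) := by rw [hr₁def, hr₂def]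
end
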